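/- arXiv:1406.6015 — 4 statements merged into one kernel-verified Lean document; each statement's English description precedes it below -/
import Mathlib

section
/- Let A be a row circular binary matrix satisfying the standard assumptions and v, v' distinct vertices of Q*(A). If supp(v) is contained in a single connected component of G(v,v'), then G(v,v') is either connected or almost-connected (exactly two components, one an isolated node); in the almost-connected case |supp(v)| = |supp(v')|. -/
open Finset

/-- Support of a vector. -/
def supp {n : ℕ} (x : Fin n → ℝ) : Set (Fin n) := {j | x j ≠ 0}

/-- Support of the `t`-th row of a matrix. -/
def rowSupp {m n : ℕ} (A : Matrix (Fin m) (Fin n) ℝ) (t : Fin m) : Set (Fin n) :=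
  {j | A t j ≠ 0}

def IsBinaryMatrix {m n : ℕ} (A : Matrix (Fin m) (Fin n) ℝ) : Prop :=
  ∀ t j, A t j = 0 ∨ A t j = 1

def IsBinaryVec {n : ℕ} (x : Fin n → ℝ) : Prop := ∀ j, x j = 0 ∨ x j = 1

/-- The polyhedron `{x | A x ≥ b, x ≥ 0}`. -/
def polyP {m n : ℕ} (A : Matrix (Fin m) (Fin n) ℝ) (b : Fin m → ℝ) : Set (Fin n → ℝ) :=
  {x | (∀ i, b i ≤ ∑ j, A i j * x j) ∧ ∀ j, 0 ≤ x j}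

/-- The linear relaxation `Q(A) = {x | A x ≥ 1, x ≥ 0}`. -/
def polyQ {m n : ℕ} (A : Matrix (Fin m) (Fin n) ℝ) : Set (Fin n → ℝ) :=
  {x | (∀ i, 1 ≤ ∑ j, A i j * x j) ∧ ∀ j, 0 ≤ x j}

/-- The set covering polyhedron `Q*(A)`: convex hull of nonnegative integer solutions of
`A x ≥ 1`. -/
def Qstar {m n : ℕ} (A : Matrix (Fin m) (Fin n) ℝ) : Set (Fin n → ℝ) :=
  convexHull ℝ {x | (∀ j, ∃ k : ℕ, x j = k) ∧ ∀ i, 1 ≤ ∑ j, A i j * x j}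

/-- A vertex of a convex set is an extreme point. -/
def IsVertex {n : ℕ} (S : Set (Fin n → ℝ)) (v : Fin n → ℝ) : Prop :=
  v ∈ S.extremePoints ℝ

/-- Two distinct vertices are adjacent when they lie on a common edge, i.e. the segment
joining them is a face (extreme subset) of `S`. -/
def AdjacentVerts {n : ℕ} (S : Set (Fin n → ℝ)) (v w : Fin n → ℝ) : Prop :=
  v ≠ w ∧ IsVertex S v ∧ IsVertex S w ∧ IsExtreme ℝ S (segment ℝ v w)

/-- There is a row support `C` with `C ∩ supp v = {p}` and `C ∩ supp v' = {p'}`. -/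
def jsgEdge {m n : ℕ} (A : Matrix (Fin m) (Fin n) ℝ) (v v' : Fin n → ℝ)
    (p p' : Fin n) : Prop :=
  ∃ t, rowSupp A t ∩ supp v = {p} ∧ rowSupp A t ∩ supp v' = {p'}

/-- The joint saturation graph of `v` and `v'` with respect to `A`. -/
def JSG {m n : ℕ} (A : Matrix (Fin m) (Fin n) ℝ) (v v' : Fin n → ℝ) :
    SimpleGraph (Fin n) where
  Adj p p' := p ≠ p' ∧ (jsgEdge A v v' p p' ∨ jsgEdge A v v' p' p)
  symm := by constructor; intro p p' h; exact ⟨h.1.symm, h.2.symm⟩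
  loopless := by constructor; intro p h; exact h.1 rfl

/-- The node set of the joint saturation graph: the symmetric difference of the supports. -/
def jsgNodes {n : ℕ} (v v' : Fin n → ℝ) : Set (Fin n) :=
  (supp v \ supp v') ∪ (supp v' \ supp v)

def JSGConnected {m n : ℕ} (A : Matrix (Fin m) (Fin n) ℝ) (v v' : Fin n → ℝ) : Prop :=
  ∀ p ∈ jsgNodes v v', ∀ q ∈ jsgNodes v v', (JSG A v v').Reachable p q

/-- One of the two partite sets is contained in a single connected component. -/
def JSGPartiteConnected {m n : ℕ} (A : Matrix (Fin m) (Fin n) ℝ) (v v' : Fin n → ℝ) : Prop :=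
  (∀ p ∈ supp v \ supp v', ∀ q ∈ supp v \ supp v', (JSG A v v').Reachable p q) ∨
  (∀ p ∈ supp v' \ supp v, ∀ q ∈ supp v' \ supp v, (JSG A v v').Reachable p q)

/-- Exactly two components, one of which is an isolated node. -/
def JSGAlmostConnected {m n : ℕ} (A : Matrix (Fin m) (Fin n) ℝ) (v v' : Fin n → ℝ) : Prop :=
  ∃ q ∈ jsgNodes v v', (∀ p, ¬ (JSG A v v').Adj q p) ∧ (jsgNodes v v' \ {q}).Nonempty ∧
    ∀ p ∈ jsgNodes v v' \ {q}, ∀ r ∈ jsgNodes v v' \ {q}, (JSG A v v').Reachable p r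

/-- The (directed) circular arc from `i` to `j` in `Fin n`. -/
def arc {n : ℕ} [NeZero n] (i j : Fin n) : Set (Fin n) :=
  {k | ∃ h : ℕ, h ≤ ((j - i : Fin n) : ℕ) ∧ k = i + (Fin.ofNat n h)}

/-- A matrix is row circular if each row support is a circular arc. -/
def RowCircular {m n : ℕ} [NeZero n] (A : Matrix (Fin m) (Fin n) ℝ) : Prop :=
  ∀ t, ∃ i j : Fin n, rowSupp A t = arc i j

/-- The standard assumptions: binary, no dominating rows, between 2 and n-1 ones per row,
no all-zero or all-one column. -/
def StandardAssumptions {m n : ℕ} (A : Matrix (Fin m) (Fin n) ℝ) : Prop :=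
  IsBinaryMatrix A ∧
  (∀ s t : Fin m, s ≠ t → ¬ rowSupp A s ⊆ rowSupp A t) ∧
  (∀ t, 2 ≤ (rowSupp A t).ncard ∧ (rowSupp A t).ncard ≤ n - 1) ∧
  (∀ j : Fin n, (∃ t, A t j ≠ 0) ∧ (∃ t, A t j = 0))

/-- `a` and `b` occur consecutively (in either order) in the list `l`. -/
def ListConsec {α : Type*} (l : List α) (a b : α) : Prop :=
  ∃ k : ℕ, (l[k]? = some a ∧ l[k+1]? = some b) ∨ (l[k]? = some b ∧ l[k+1]? = some a)

/-- `a` and `b` occur cyclically consecutively (in either order) in the list `l`. -/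
def CycConsec {α : Type*} (l : List α) (a b : α) : Prop :=
  ∃ k : ℕ, k < l.length ∧
    ((l[k]? = some a ∧ l[(k+1) % l.length]? = some b) ∨
     (l[k]? = some b ∧ l[(k+1) % l.length]? = some a))

/-- The set `S` induces a path (possibly a single node) in `G`. -/
def IsPathOn {n : ℕ} (G : SimpleGraph (Fin n)) (S : Set (Fin n)) : Prop :=
  ∃ l : List (Fin n), l.Nodup ∧ (∀ x, x ∈ S ↔ x ∈ l) ∧
    (∀ a b, a ∈ S → G.Adj a b → ListConsec l a b) ∧
    (∀ a b, ListConsec l a b → G.Adj a b)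

/-- The set `S` induces a cycle in `G`. -/
def IsCycleOn {n : ℕ} (G : SimpleGraph (Fin n)) (S : Set (Fin n)) : Prop :=
  ∃ l : List (Fin n), 3 ≤ l.length ∧ l.Nodup ∧ (∀ x, x ∈ S ↔ x ∈ l) ∧
    (∀ a b, a ∈ S → G.Adj a b → CycConsec l a b) ∧
    (∀ a b, CycConsec l a b → G.Adj a b)

/-- `p` and `q` are cyclically consecutive elements of `S`. -/
def CyclConsecIn {n : ℕ} [NeZero n] (S : Set (Fin n)) (p q : Fin n) : Prop :=
  p ≠ q ∧ p ∈ S ∧ q ∈ S ∧ (arc p q ∩ S = {p, q} ∨ arc q p ∩ S = {p, q})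

/-- The circulant matrix `C(n,2)` with row supports `{t, t+1}` (mod n). -/
def Cn2 (n : ℕ) [NeZero n] : Matrix (Fin n) (Fin n) ℝ :=
  fun t j => if j = t ∨ j = t + 1 then 1 else 0

/-- Append a row to a matrix. -/
def appendRow {m n : ℕ} (A : Matrix (Fin m) (Fin n) ℝ) (a : Fin n → ℝ) :
    Matrix (Fin (m+1)) (Fin n) ℝ :=
  fun t j => if h : (t : ℕ) < m then A ⟨t, h⟩ j else a j

/-- A set of points is integral if all its extreme points are integer vectors. -/
def IsIntegralSet {n : ℕ} (S : Set (Fin n → ℝ)) : Prop :=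
  ∀ x ∈ S.extremePoints ℝ, ∀ j, ∃ z : ℤ, x j = z

/-- A binary matrix is minimally nonideal if `Q(A)` is not integral but both restrictions
`Q(A) ∩ {x_i = 0}` and `Q(A) ∩ {x_i = 1}` are integral for every coordinate `i`. -/
def MinimallyNonideal {m n : ℕ} (A : Matrix (Fin m) (Fin n) ℝ) : Prop :=
  ¬ IsIntegralSet (polyQ A) ∧
  ∀ i : Fin n, IsIntegralSet (polyQ A ∩ {x | x i = 0}) ∧
               IsIntegralSet (polyQ A ∩ {x | x i = 1})

/-- The matrix of the degenerate projective plane with `t+1` points and lines. -/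
def Jmat (t : ℕ) : Matrix (Fin (t+1)) (Fin (t+1)) ℝ :=
  fun i j => if i = 0 then (if j = 0 then 0 else 1) else (if j = 0 ∨ j = i then 1 else 0)

/-- `A` is isomorphic to some degenerate projective plane matrix `J_t`, `t ≥ 2`. -/
def IsoToDegenProjPlane {m n : ℕ} (A : Matrix (Fin m) (Fin n) ℝ) : Prop :=
  ∃ t : ℕ, 2 ≤ t ∧ ∃ (σ : Fin m ≃ Fin (t+1)) (τ : Fin n ≃ Fin (t+1)),
    ∀ i j, A i j = Jmat t (σ i) (τ j)

/-- `A₁` is the core of `A`: a square nonsingular row submatrix with `r` ones per row and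
per column, all other rows of `A` having more than `r` ones. -/
def IsCore {m n : ℕ} (A : Matrix (Fin m) (Fin n) ℝ) (A₁ : Matrix (Fin n) (Fin n) ℝ)
    (r : ℕ) : Prop :=
  2 ≤ r ∧ A₁.det ≠ 0 ∧
  (∃ f : Fin n → Fin m, Function.Injective f ∧ (∀ i, A₁ i = A (f i)) ∧
    ∀ t, t ∉ Set.range f → r < (rowSupp A t).ncard) ∧
  (∀ i, (rowSupp A₁ i).ncard = r) ∧ (∀ j, {i | A₁ i j ≠ 0}.ncard = r)

/-- `B₁` is the core of the blocker of `A`: a square nonsingular matrix whose rows are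
binary vertices of `Q*(A)` with `s` ones per row and per column, all other binary
vertices of `Q*(A)` having more than `s` ones. -/
def IsBlockerCore {m n : ℕ} (A : Matrix (Fin m) (Fin n) ℝ) (B₁ : Matrix (Fin n) (Fin n) ℝ)
    (s : ℕ) : Prop :=
  2 ≤ s ∧ B₁.det ≠ 0 ∧
  (∀ i, IsBinaryVec (B₁ i) ∧ IsVertex (Qstar A) (B₁ i)) ∧
  Function.Injective (fun i => B₁ i) ∧
  (∀ i, (rowSupp B₁ i).ncard = s) ∧ (∀ j, {i | B₁ i j ≠ 0}.ncard = s) ∧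
  (∀ x, IsBinaryVec x → IsVertex (Qstar A) x → (∀ i, x ≠ B₁ i) → s < (supp x).ncard)

/-- `w^i` for `n = 3ν`: the complement of the characteristic vector of the residue class
`i` mod 3. -/
def wVec (n : ℕ) (i : Fin 3) : Fin n → ℝ :=
  fun k => if (k : ℕ) % 3 = (i : ℕ) then 0 else 1

/-- `a^i` for `n = 3ν`: the characteristic vector of the residue class `i` mod 3
(`a¹ = (1,0,0,1,0,0,…)` corresponds to `i = 0`). -/
def aVec (n : ℕ) (i : ℕ) : Fin n → ℝ :=
  fun k => if (k : ℕ) % 3 = i then 1 else 0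

set_option linter.unusedSectionVars false
namespace Stmt8Aux
open Fin.NatCast Fin.CommRing

/-- the `p`-th unit vector. -/
def ee {n : ℕ} (p : Fin n) : Fin n → ℝ := fun j => if j = p then 1 else 0

@[simp] lemma ee_self {n : ℕ} (p : Fin n) : ee p p = 1 := by simp [ee]
lemma ee_ne {n : ℕ} {p j : Fin n} (h : j ≠ p) : ee p j = 0 := by simp [ee, h]
lemma ee_ne_zero {n : ℕ} (p : Fin n) : ee p ≠ 0 := by
  intro h
  have := congrFun h p
  simp [ee] at this


variable {n : ℕ} [NeZero n]

def dd (a b : Fin n) : ℕ := ((b - a : Fin n) : ℕ)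
lemma dd_lt (a b : Fin n) : dd a b < n := (b - a).isLt
lemma dd_self (a : Fin n) : dd a a = 0 := by simp [dd]
lemma add_dd (a b : Fin n) : a + ((dd a b : ℕ) : Fin n) = b := by
  simp [dd, Fin.cast_val_eq_self]
lemma dd_eq_zero {a b : Fin n} : dd a b = 0 ↔ a = b := by
  constructor
  · intro h
    have := add_dd a b
    rw [h] at this; simpa using this
  · rintro rfl; exact dd_self a
lemma dd_inj {a b c : Fin n} (h : dd a b = dd a c) : b = c := by
  have h1 := add_dd a b
  have h2 := add_dd a c
  rw [h] at h1; rw [h1] at h2; exact h2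
lemma dd_add_mod (a b c : Fin n) : dd a c = (dd a b + dd b c) % n := by
  have h : (c - a : Fin n) = (b - a) + (c - b) := by ring
  rw [dd, h, Fin.val_add]; rfl
lemma dd_cases (a b c : Fin n) :
    dd a c = dd a b + dd b c ∨ dd a c + n = dd a b + dd b c := by
  have h := dd_add_mod a b c
  rcases lt_or_ge (dd a b + dd b c) n with hlt | hge
  · left; rw [h, Nat.mod_eq_of_lt hlt]
  · right
    have h2 : dd a b + dd b c - n < n := by
      have := dd_lt a b; have := dd_lt b c; omega
    rw [h, Nat.mod_eq_sub_mod hge, Nat.mod_eq_of_lt h2]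
    have := dd_lt a b; have := dd_lt b c; omega
lemma dd_antisymm {a b : Fin n} (h : a ≠ b) : dd a b + dd b a = n := by
  rcases dd_cases a b a with h1 | h1
  · rw [dd_self] at h1
    have : dd a b = 0 := by omega
    exact absurd (dd_eq_zero.mp this) h
  · rw [dd_self] at h1; omega
lemma dd_sub {a b c : Fin n} (h : dd a b ≤ dd a c) : dd b c = dd a c - dd a b := by
  rcases dd_cases a b c with h1 | h1
  · omega
  · have := dd_lt b c; omega
lemma dd_add_of_le {a b c : Fin n} (h : dd a b ≤ dd a c) :
    dd a c = dd a b + dd b c := by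
  have := dd_sub h; omega

/-! ### arcs -/

lemma mem_arc {i j k : Fin n} : k ∈ arc i j ↔ dd i k ≤ dd i j := by
  constructor
  · rintro ⟨h, hle, rfl⟩
    have hlt : h < n := lt_of_le_of_lt hle (dd_lt i j)
    have : dd i (i + (h : Fin n)) = h := by
      simp [dd, Fin.val_cast_of_lt hlt]
    change dd i (i + (h : Fin n)) ≤ dd i j
    rw [this]; exact hle
  · intro h
    exact ⟨dd i k, h, (add_dd i k).symm⟩

lemma self_mem_arc {i j : Fin n} : i ∈ arc i j := by
  rw [mem_arc, dd_self]; exact Nat.zero_le _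

lemma right_mem_arc {i j : Fin n} : j ∈ arc i j := by rw [mem_arc]

/-- Betweenness: two points in an arc, one of the two sub-arcs joining them is inside. -/
lemma arc_between {i j p q : Fin n} (hp : p ∈ arc i j) (hq : q ∈ arc i j) :
    arc p q ⊆ arc i j ∨ arc q p ⊆ arc i j := by
  rw [mem_arc] at hp hq
  rcases le_total (dd i p) (dd i q) with h | h
  · left
    intro k hk
    rw [mem_arc] at hk ⊢
    rw [dd_sub h] at hk
    have hw : dd i p + dd p k ≤ dd i q := by omega
    rcases dd_cases i p k with h1 | h1
    · omega
    · have := dd_lt i q; omega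
  · right
    intro k hk
    rw [mem_arc] at hk ⊢
    rw [dd_sub h] at hk
    have hw : dd i q + dd q k ≤ dd i p := by omega
    rcases dd_cases i q k with h1 | h1
    · omega
    · have := dd_lt i p; omega

/-! ### successor and predecessor in a finite set on the circle -/

open Classical in
/-- the next element of `S` strictly after `q` (cyclically). -/
noncomputable def nxt (S : Set (Fin n)) (q : Fin n) : Fin n :=
  if h : ∃ d, 0 < d ∧ d < n ∧ q + (d : Fin n) ∈ S then q + ((Nat.find h : ℕ) : Fin n) else q

open Classical in
/-- the previous element of `S` strictly before `q` (cyclically). -/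
noncomputable def prv (S : Set (Fin n)) (q : Fin n) : Fin n :=
  if h : ∃ d, 0 < d ∧ d < n ∧ q - (d : Fin n) ∈ S then q - ((Nat.find h : ℕ) : Fin n) else q

variable {S : Set (Fin n)}

open Classical in
lemma nxt_exists (hbig : ∀ x : Fin n, ∃ y ∈ S, y ≠ x) (q : Fin n) :
    ∃ d, 0 < d ∧ d < n ∧ q + (d : Fin n) ∈ S := by
  obtain ⟨y, hy, hne⟩ := hbig q
  refine ⟨dd q y, ?_, dd_lt q y, ?_⟩
  · rcases Nat.eq_zero_or_pos (dd q y) with h | h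
    · exact ((hne (dd_eq_zero.mp h).symm)).elim
    · exact h
  · rw [add_dd]; exact hy

open Classical in
lemma prv_exists (hbig : ∀ x : Fin n, ∃ y ∈ S, y ≠ x) (q : Fin n) :
    ∃ d, 0 < d ∧ d < n ∧ q - (d : Fin n) ∈ S := by
  obtain ⟨y, hy, hne⟩ := hbig q
  refine ⟨dd y q, ?_, dd_lt y q, ?_⟩
  · rcases Nat.eq_zero_or_pos (dd y q) with h | h
    · exact ((hne (dd_eq_zero.mp h))).elim
    · exact h
  · have : q - ((dd y q : ℕ) : Fin n) = y := by
      rw [sub_eq_iff_eq_add]; exact (add_dd y q).symm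
    rw [this]; exact hy

section NxtPrv
variable (hbig : ∀ x : Fin n, ∃ y ∈ S, y ≠ x)
include hbig

open Classical in
lemma dd_nxt_pos_mem (q : Fin n) :
    nxt S q ∈ S ∧ nxt S q ≠ q ∧ dd q (nxt S q) = Nat.find (nxt_exists hbig q) := by
  have hex := nxt_exists hbig q
  have hspec := Nat.find_spec hex
  obtain ⟨hpos, hlt, hmem⟩ := hspec
  rw [nxt, dif_pos hex]
  have hdd : dd q (q + ((Nat.find hex : ℕ) : Fin n)) = Nat.find hex := by
    simp [dd, Fin.val_cast_of_lt hlt]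
  refine ⟨hmem, ?_, hdd⟩
  intro h
  have : dd q q = Nat.find hex := by rw [← hdd, h]
  rw [dd_self] at this; omega

lemma nxt_mem (q : Fin n) : nxt S q ∈ S := (dd_nxt_pos_mem hbig q).1
lemma nxt_ne (q : Fin n) : nxt S q ≠ q := (dd_nxt_pos_mem hbig q).2.1

open Classical in
lemma nxt_min {q y : Fin n} (hy : y ∈ S) (hne : y ≠ q) : dd q (nxt S q) ≤ dd q y := by
  rw [(dd_nxt_pos_mem hbig q).2.2]
  apply Nat.find_min'
  refine ⟨?_, dd_lt q y, by rw [add_dd]; exact hy⟩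
  rcases Nat.eq_zero_or_pos (dd q y) with h | h
  · exact ((hne (dd_eq_zero.mp h).symm)).elim
  · exact h

lemma nxt_unique {q y : Fin n} (hy : y ∈ S) (hne : y ≠ q)
    (h : dd q y ≤ dd q (nxt S q)) : y = nxt S q :=
  dd_inj (le_antisymm h (nxt_min hbig hy hne))

open Classical in
lemma dd_prv_pos_mem (q : Fin n) :
    prv S q ∈ S ∧ prv S q ≠ q ∧ dd (prv S q) q = Nat.find (prv_exists hbig q) := by
  have hex := prv_exists hbig q
  have hspec := Nat.find_spec hex
  obtain ⟨hpos, hlt, hmem⟩ := hspec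
  rw [prv, dif_pos hex]
  have hdd : dd (q - ((Nat.find hex : ℕ) : Fin n)) q = Nat.find hex := by
    have : (q - (q - ((Nat.find hex : ℕ) : Fin n)) : Fin n) = ((Nat.find hex : ℕ) : Fin n) := by
      ring
    rw [dd, this, Fin.val_cast_of_lt hlt]
  refine ⟨hmem, ?_, hdd⟩
  intro h
  have : dd q q = Nat.find hex := by rw [← hdd, h]
  rw [dd_self] at this; omega

lemma prv_mem (q : Fin n) : prv S q ∈ S := (dd_prv_pos_mem hbig q).1
lemma prv_ne (q : Fin n) : prv S q ≠ q := (dd_prv_pos_mem hbig q).2.1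

open Classical in
lemma prv_min {q y : Fin n} (hy : y ∈ S) (hne : y ≠ q) : dd (prv S q) q ≤ dd y q := by
  rw [(dd_prv_pos_mem hbig q).2.2]
  apply Nat.find_min'
  refine ⟨?_, dd_lt y q, ?_⟩
  · rcases Nat.eq_zero_or_pos (dd y q) with h | h
    · exact ((hne (dd_eq_zero.mp h))).elim
    · exact h
  · have : q - ((dd y q : ℕ) : Fin n) = y := by
      rw [sub_eq_iff_eq_add]; exact (add_dd y q).symm
    rw [this]; exact hy

lemma prv_unique {q y : Fin n} (hy : y ∈ S) (hne : y ≠ q)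
    (h : dd y q ≤ dd (prv S q) q) : y = prv S q := by
  have h2 := prv_min hbig hy hne
  have heq : dd y q = dd (prv S q) q := le_antisymm h h2
  -- dd y q = dd (prv S q) q ⇒ dd q y = dd q (prv S q) via antisymm ⇒ inj
  have hne2 : prv S q ≠ q := prv_ne hbig q
  have a1 := dd_antisymm hne
  have a2 := dd_antisymm hne2
  have a1' := dd_antisymm (Ne.symm hne)
  have a2' := dd_antisymm (Ne.symm hne2)
  exact dd_inj (a := q) (by omega)

/-- `prv (nxt q) = q` for `q ∈ S`. -/
lemma prv_nxt {q : Fin n} (hq : q ∈ S) : prv S (nxt S q) = q := by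
  set s := nxt S q with hs
  set x := prv S s with hx
  by_contra hne
  have hxq : x ≠ q := fun h => hne (by rw [h])
  have hxs : x ≠ s := prv_ne hbig s
  have hqs : q ≠ s := Ne.symm (nxt_ne hbig q)
  have h1 : dd x s ≤ dd q s := prv_min hbig hq hqs
  rcases dd_cases q x s with h2 | h2
  · -- dd q s = dd q x + dd x s
    have hxS : x ∈ S := prv_mem hbig s
    have h3 : dd q s ≤ dd q x := nxt_min hbig hxS hxq
    have : dd x s = 0 := by omega
    exact hxs (dd_eq_zero.mp this)
  · have := dd_lt q x; have := dd_lt q s; have := dd_lt x s; omega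

/-- `nxt (prv q) = q` for `q ∈ S`. -/
lemma nxt_prv {q : Fin n} (hq : q ∈ S) : nxt S (prv S q) = q := by
  set s := prv S q with hs
  set x := nxt S s with hx
  by_contra hne
  have hxq : x ≠ q := fun h => hne (by rw [h])
  have hxs : x ≠ s := nxt_ne hbig s
  have hqs : q ≠ s := Ne.symm (prv_ne hbig q)
  have h1 : dd s x ≤ dd s q := nxt_min hbig hq hqs
  rcases dd_cases s x q with h2 | h2
  · have hxS : x ∈ S := nxt_mem hbig s
    have h3 : dd s q ≤ dd x q := prv_min hbig hxS hxq
    have : dd s x = 0 := by omega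
    exact hxs (dd_eq_zero.mp this).symm
  · have := dd_lt s x; have := dd_lt s q; have := dd_lt x q; omega

/-- For `y ∈ S`, `y ≠ x`: `prv x` lies (weakly) between `y` and `x`. -/
lemma dd_prv_le {x y : Fin n} (hy : y ∈ S) (hne : y ≠ x) : dd y (prv S x) ≤ dd y x := by
  by_cases h : y = prv S x
  · subst h; simp [dd_self]
  have h1 : dd (prv S x) x ≤ dd y x := prv_min hbig hy hne
  rcases dd_cases y (prv S x) x with h2 | h2
  · omega
  · have := dd_lt y (prv S x); have := dd_lt y x; have := dd_lt (prv S x) x; omega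

end NxtPrv

/-- helper: can't be extreme in a hull if `v ± e` are both in the base set. -/
lemma not_extreme_of_pm {n : ℕ} {S : Set (Fin n → ℝ)} {v e : Fin n → ℝ} (he : e ≠ 0)
    (hx : v - e ∈ S) (hy : v + e ∈ S) : v ∉ (convexHull ℝ S).extremePoints ℝ := by
  intro hv
  have hseg : v ∈ openSegment ℝ (v - e) (v + e) := by
    refine ⟨1/2, 1/2, by norm_num, by norm_num, by norm_num, ?_⟩
    funext j
    simp only [Pi.add_apply, Pi.smul_apply, Pi.sub_apply, smul_eq_mul]
    ring
  have := (hv.2 (subset_convexHull ℝ S hx) (subset_convexHull ℝ S hy) hseg)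
  apply he
  funext j
  have h2 := congrFun this j
  simp only [Pi.sub_apply] at h2
  have h3 : e j = 0 := by linarith
  simpa using h3

lemma exists_ne_of_mem_ne_singleton {α : Type*} {s : Set α} {p : α} (hp : p ∈ s)
    (h : s ≠ {p}) : ∃ x ∈ s, x ≠ p := by
  by_contra h2
  push_neg at h2
  exact h (Set.eq_singleton_iff_unique_mem.mpr ⟨hp, fun x hx => h2 x hx⟩)

section VertexFacts

variable {m n : ℕ} {A : Matrix (Fin m) (Fin n) ℝ} {v : Fin n → ℝ}
variable (hbin : IsBinaryMatrix A)
include hbin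

lemma mulA_nonneg (hint : ∀ j, ∃ k : ℕ, v j = k) (i : Fin m) (j : Fin n) :
    0 ≤ A i j * v j := by
  obtain ⟨k, hk⟩ := hint j
  rcases hbin i j with h | h <;> rw [h, hk] <;> positivity

lemma single_term_le (hint : ∀ j, ∃ k : ℕ, v j = k)
    (hfeas : ∀ i, 1 ≤ ∑ j, A i j * v j) (i : Fin m) (j : Fin n) :
    A i j * v j ≤ ∑ j', A i j' * v j' :=
  Finset.single_le_sum (fun j' _ => mulA_nonneg hbin hint i j') (Finset.mem_univ j)

lemma sum_single_term (i : Fin m) (p : Fin n) :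
    ∑ j, A i j * ee p j = A i p := by
  rw [Finset.sum_eq_single p]
  · simp
  · intro b _ hb; simp [ee, hb]
  · intro h; exact absurd (Finset.mem_univ p) h

lemma sum_sub_single (i : Fin m) (p : Fin n) :
    ∑ j, A i j * (v - ee p) j = (∑ j, A i j * v j) - A i p := by
  have h : ∀ j, A i j * (v - ee p) j
      = A i j * v j - A i j * ee p j := by
    intro j; simp only [Pi.sub_apply]; ring
  rw [Finset.sum_congr rfl (fun j _ => h j), Finset.sum_sub_distrib, sum_single_term hbin]

lemma sum_add_single (i : Fin m) (p : Fin n) :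
    ∑ j, A i j * (v + ee p) j = (∑ j, A i j * v j) + A i p := by
  have h : ∀ j, A i j * (v + ee p) j
      = A i j * v j + A i j * ee p j := by
    intro j; simp only [Pi.add_apply]; ring
  rw [Finset.sum_congr rfl (fun j _ => h j), Finset.sum_add_distrib, sum_single_term hbin]

/-- STEP: vertices of `Qstar` are binary vectors. -/
lemma vertex_binary (hv : IsVertex (Qstar A) v) : IsBinaryVec v := by
  have hbase := extremePoints_convexHull_subset hv
  obtain ⟨hint, hfeas⟩ := hbase
  intro j
  obtain ⟨k, hk⟩ := hint j
  match k, hk with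
  | 0, hk => exact Or.inl (by simpa using hk)
  | 1, hk => exact Or.inr (by simpa using hk)
  | (k+2), hk =>
    exfalso
    have hvj : (2:ℝ) ≤ v j := by rw [hk]; push_cast; linarith
    refine not_extreme_of_pm (e := ee j) ?_ ?_ ?_ hv
    · intro h
      have := congrFun h j
      simp at this
    · constructor
      · intro j'
        by_cases hj : j' = j
        · subst hj
          exact ⟨k + 1, by simp [hk]; push_cast; ring⟩
        · obtain ⟨k', hk'⟩ := hint j'
          exact ⟨k', by simp [ee, hj, hk']⟩
      · intro i
        rw [sum_sub_single hbin]
        rcases hbin i j with h | h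
        · rw [h]; simpa using hfeas i
        · have h2 : A i j * v j ≤ ∑ j', A i j' * v j' := single_term_le hbin hint hfeas i j
          rw [h] at h2 ⊢
          linarith
    · constructor
      · intro j'
        by_cases hj : j' = j
        · subst hj; exact ⟨k + 3, by simp [hk]; push_cast; ring⟩
        · obtain ⟨k', hk'⟩ := hint j'
          exact ⟨k', by simp [ee, hj, hk']⟩
      · intro i
        rw [sum_add_single hbin]
        rcases hbin i j with h | h
        · rw [h]; simpa using hfeas i
        · rw [h]; linarith [hfeas i]

lemma vertex_cover (hv : IsVertex (Qstar A) v) (t : Fin m) :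
    ∃ j, A t j = 1 ∧ v j = 1 := by
  obtain ⟨hint, hfeas⟩ := extremePoints_convexHull_subset hv
  have hbv := vertex_binary hbin hv
  by_contra hno
  push_neg at hno
  have hz : ∀ j, A t j * v j = 0 := by
    intro j
    rcases hbin t j with h | h
    · rw [h, zero_mul]
    · rcases hbv j with h2 | h2
      · rw [h2, mul_zero]
      · exact absurd h2 (hno j h)
  have := hfeas t
  rw [Finset.sum_congr rfl (fun j _ => hz j), Finset.sum_const_zero] at this
  linarith

lemma vertex_minimal (hv : IsVertex (Qstar A) v) {p : Fin n} (hp : p ∈ supp v) :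
    ∃ t, rowSupp A t ∩ supp v = {p} := by
  by_contra hcon
  push_neg at hcon
  obtain ⟨hint, hfeas⟩ := extremePoints_convexHull_subset hv
  have hbv := vertex_binary hbin hv
  have hvp : v p = 1 := (hbv p).resolve_left hp
  have hother : ∀ i, A i p ≠ 0 → ∃ j, j ≠ p ∧ A i j ≠ 0 ∧ v j ≠ 0 := by
    intro i hip
    have hmem : p ∈ rowSupp A i ∩ supp v := ⟨hip, hp⟩
    obtain ⟨x, hx, hxp⟩ := exists_ne_of_mem_ne_singleton hmem (hcon i)
    exact ⟨x, hxp, hx.1, hx.2⟩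
  refine not_extreme_of_pm (e := ee p) (ee_ne_zero p) ?_ ?_ hv
  · constructor
    · intro j'
      by_cases hj : j' = p
      · subst hj; exact ⟨0, by simp [hvp]⟩
      · obtain ⟨k', hk'⟩ := hint j'
        exact ⟨k', by simp [ee_ne hj, hk']⟩
    · intro i
      rw [sum_sub_single hbin]
      rcases eq_or_ne (A i p) 0 with h | h
      · rw [h]; simpa using hfeas i
      · obtain ⟨j, hjp, hAj, hvj⟩ := hother i h
        have hAip : A i p = 1 := (hbin i p).resolve_left h
        have hAij : A i j = 1 := (hbin i j).resolve_left hAj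
        have hvj1 : v j = 1 := (hbv j).resolve_left hvj
        have h2 : 2 ≤ ∑ j', A i j' * v j' := by
          have hsub := Finset.sum_le_sum_of_subset_of_nonneg
            (Finset.subset_univ ({p, j} : Finset (Fin n)))
            (fun k _ _ => mulA_nonneg hbin hint i k)
          rw [Finset.sum_pair (Ne.symm hjp), hAip, hAij, hvp, hvj1] at hsub
          linarith
        rw [hAip]; linarith
  · constructor
    · intro j'
      by_cases hj : j' = p
      · subst hj; exact ⟨2, by simp [hvp]; norm_num⟩
      · obtain ⟨k', hk'⟩ := hint j'
        exact ⟨k', by simp [ee_ne hj, hk']⟩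
    · intro i
      rw [sum_add_single hbin]
      rcases hbin i p with h | h
      · rw [h]; simpa using hfeas i
      · rw [h]; linarith [hfeas i]

end VertexFacts

/-- generic interval-crossing along a walk. -/
lemma walk_ivt {V : Type*} {G : SimpleGraph V} (c : V → ℕ) (γ : ℕ) {P : Prop}
    (hcross : ∀ a b, G.Adj a b → c a ≤ γ → γ < c b → P) :
    ∀ {a b : V}, G.Walk a b → c a ≤ γ → γ < c b → P := by
  intro a b W
  induction W with
  | nil => intro h1 h2; omega
  | @cons u x w h W ih =>
    intro h1 h2
    by_cases hc : c x ≤ γ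
    · exact ih hc h2
    · exact hcross u x h h1 (not_le.mp hc)

lemma reachable_ne_exists_adj {V : Type*} {G : SimpleGraph V} {a b : V}
    (h : G.Reachable a b) (hne : a ≠ b) : ∃ x, G.Adj a x := by
  refine h.elim (fun W => ?_)
  cases W with
  | nil => exact absurd rfl hne
  | cons h _ => exact ⟨_, h⟩

/-! ### The sandwich lemma: an isolated node has both cyclic neighbours in `V1`. -/

section Combinatorial

variable {n : ℕ} [NeZero n] {G : SimpleGraph (Fin n)} {V1 V2 : Set (Fin n)}

lemma sandwich
    (hdisj : ∀ x, x ∈ V1 → x ∈ V2 → False)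
    (hbig : ∀ x : Fin n, ∃ y ∈ V1 ∪ V2, y ≠ x)
    (hbip : ∀ a b, G.Adj a b → (a ∈ V1 ∧ b ∈ V2) ∨ (b ∈ V1 ∧ a ∈ V2))
    (hconsec : ∀ a b, G.Adj a b → b = nxt (V1 ∪ V2) a ∨ a = nxt (V1 ∪ V2) b)
    (hniso : ∀ p ∈ V1, ∃ x, G.Adj p x)
    {q : Fin n} (hq : q ∈ V2) (hiso : ∀ p, ¬ G.Adj q p)
    {C : Set (Fin n)} (hCarc : ∃ i j, C = arc i j)
    (hCV2 : C ∩ V2 = {q}) (hCV1 : (C ∩ V1).Nonempty)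
    (hsat : ∀ p, C ∩ V1 = {p} → G.Adj p q) :
    nxt (V1 ∪ V2) q ∈ V1 ∧ prv (V1 ∪ V2) q ∈ V1 := by
  set S : Set (Fin n) := V1 ∪ V2 with hS
  have hqS : q ∈ S := Or.inr hq
  have hqC : q ∈ C := by
    have h : q ∈ ({q} : Set (Fin n)) := rfl
    rw [← hCV2] at h
    exact h.1
  obtain ⟨i0, j0, hC⟩ := hCarc
  have hmemC : ∀ {x : Fin n}, x ∈ C → x ∈ S → x ∈ V1 ∨ x = q := by
    intro x hxC hxS
    rcases hxS with h | h
    · exact Or.inl h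
    · right
      have h2 : x ∈ C ∩ V2 := ⟨hxC, h⟩
      rwa [hCV2] at h2
  obtain ⟨p₀, hp₀⟩ := hCV1
  have hp₀S : p₀ ∈ S := Or.inl hp₀.2
  have hp₀q : p₀ ≠ q := fun h => hdisj p₀ hp₀.2 (h ▸ hq)
  constructor
  · -- `nxt S q ∈ V1`
    by_contra hn
    have hnS : nxt S q ∈ S := nxt_mem hbig q
    have hq2 : nxt S q ∈ V2 := hnS.resolve_left hn
    have hq₂ne : nxt S q ≠ q := nxt_ne hbig q
    have harc : ∀ p, p ∈ C → p ∈ V1 → arc p q ⊆ C := by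
      intro p hpC hpV1
      have hpq : p ≠ q := fun h => hdisj p hpV1 (h ▸ hq)
      have hb : arc p q ⊆ arc i0 j0 ∨ arc q p ⊆ arc i0 j0 :=
        arc_between (by rw [hC] at hpC; exact hpC) (by rw [hC] at hqC; exact hqC)
      rcases hb with h | h
      · rw [hC]; exact h
      · exfalso
        have hmem : nxt S q ∈ arc q p := mem_arc.mpr (nxt_min hbig (Or.inl hpV1) hpq)
        have hin : nxt S q ∈ C ∩ V2 := ⟨by rw [hC]; exact h hmem, hq2⟩
        rw [hCV2] at hin
        exact hq₂ne hin
    have hptS : prv S q ∈ S := prv_mem hbig q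
    have hptne : prv S q ≠ q := prv_ne hbig q
    have hptC : prv S q ∈ C :=
      harc p₀ hp₀.1 hp₀.2 (mem_arc.mpr (dd_prv_le hbig hp₀S hp₀q))
    have hptV1 : prv S q ∈ V1 := (hmemC hptC hptS).resolve_right hptne
    by_cases hsing : C ∩ V1 = {prv S q}
    · exact absurd ((hsat _ hsing).symm) (hiso _)
    · obtain ⟨p, hp, hppt⟩ := exists_ne_of_mem_ne_singleton (s := C ∩ V1) (p := prv S q) ⟨hptC, hptV1⟩ hsing
      have hpS : p ∈ S := Or.inl hp.2
      have hpq : p ≠ q := fun h => hdisj p hp.2 (h ▸ hq)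
      have hrS : prv S (prv S q) ∈ S := prv_mem hbig _
      have hrpt : prv S (prv S q) ≠ prv S q := prv_ne hbig _
      have h1 : dd p (prv S (prv S q)) ≤ dd p (prv S q) := dd_prv_le hbig hpS hppt
      have h2 : dd p (prv S q) ≤ dd p q := dd_prv_le hbig hpS hpq
      have hrC : prv S (prv S q) ∈ C :=
        harc p hp.1 hp.2 (mem_arc.mpr (le_trans h1 h2))
      have hrq : prv S (prv S q) ≠ q := by
        intro h
        have h3 : nxt S q = prv S q := by
          conv_lhs => rw [← h]
          exact nxt_prv hbig (Or.inl hptV1)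
        exact hdisj _ hptV1 (h3 ▸ hq2)
      have hrV1 : prv S (prv S q) ∈ V1 := (hmemC hrC hrS).resolve_right hrq
      obtain ⟨x, hx⟩ := hniso _ hptV1
      rcases hconsec _ _ hx with h | h
      · rw [h, nxt_prv hbig hqS] at hx
        exact absurd hx.symm (hiso _)
      · have hxS : x ∈ S := by
          rcases hbip _ _ hx with h2 | h2
          exacts [Or.inr h2.2, Or.inl h2.1]
        have hxr : x = prv S (prv S q) := by
          have hpn := prv_nxt hbig hxS
          rw [← h] at hpn
          exact hpn.symm
        rcases hbip _ _ hx with h2 | h2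
        · exact hdisj x (hxr ▸ hrV1) h2.2
        · exact hdisj _ hptV1 h2.2
  · -- `prv S q ∈ V1`
    by_contra hn
    have hnS : prv S q ∈ S := prv_mem hbig q
    have hq0 : prv S q ∈ V2 := hnS.resolve_left hn
    have hq₀ne : prv S q ≠ q := prv_ne hbig q
    have harc : ∀ p, p ∈ C → p ∈ V1 → arc q p ⊆ C := by
      intro p hpC hpV1
      have hpq : p ≠ q := fun h => hdisj p hpV1 (h ▸ hq)
      have hb : arc p q ⊆ arc i0 j0 ∨ arc q p ⊆ arc i0 j0 :=
        arc_between (by rw [hC] at hpC; exact hpC) (by rw [hC] at hqC; exact hqC)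
      rcases hb with h | h
      · exfalso
        have hmem : prv S q ∈ arc p q := mem_arc.mpr (dd_prv_le hbig (Or.inl hpV1) hpq)
        have hin : prv S q ∈ C ∩ V2 := ⟨by rw [hC]; exact h hmem, hq0⟩
        rw [hCV2] at hin
        exact hq₀ne hin
      · rw [hC]; exact h
    have hphS : nxt S q ∈ S := nxt_mem hbig q
    have hphne : nxt S q ≠ q := nxt_ne hbig q
    have hphC : nxt S q ∈ C :=
      harc p₀ hp₀.1 hp₀.2 (mem_arc.mpr (nxt_min hbig hp₀S hp₀q))
    have hphV1 : nxt S q ∈ V1 := (hmemC hphC hphS).resolve_right hphne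
    by_cases hsing : C ∩ V1 = {nxt S q}
    · exact absurd ((hsat _ hsing).symm) (hiso _)
    · obtain ⟨p, hp, hpph⟩ := exists_ne_of_mem_ne_singleton (s := C ∩ V1) (p := nxt S q) ⟨hphC, hphV1⟩ hsing
      have hpS : p ∈ S := Or.inl hp.2
      have hpq : p ≠ q := fun h => hdisj p hp.2 (h ▸ hq)
      have hrS : nxt S (nxt S q) ∈ S := nxt_mem hbig _
      have h1 : dd q (nxt S q) ≤ dd q p := nxt_min hbig hpS hpq
      have h2 : dd (nxt S q) p = dd q p - dd q (nxt S q) := dd_sub h1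
      have h3 : dd (nxt S q) (nxt S (nxt S q)) ≤ dd (nxt S q) p :=
        nxt_min hbig hpS hpph
      have h4 : dd q (nxt S (nxt S q)) ≤ dd q p := by
        rcases dd_cases q (nxt S q) (nxt S (nxt S q)) with h5 | h5
        · omega
        · have := dd_lt q p
          omega
      have hrC : nxt S (nxt S q) ∈ C := harc p hp.1 hp.2 (mem_arc.mpr h4)
      have hrq : nxt S (nxt S q) ≠ q := by
        intro h
        have h5 : prv S q = nxt S q := by
          conv_lhs => rw [← h]
          exact prv_nxt hbig (Or.inl hphV1)
        exact hdisj _ (h5 ▸ hphV1) hq0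
      have hrV1 : nxt S (nxt S q) ∈ V1 := (hmemC hrC hrS).resolve_right hrq
      obtain ⟨x, hx⟩ := hniso _ hphV1
      rcases hconsec _ _ hx with h | h
      · rcases hbip _ _ hx with h2 | h2
        · exact hdisj x (h ▸ hrV1) h2.2
        · exact hdisj _ hphV1 h2.2
      · have hxS : x ∈ S := by
          rcases hbip _ _ hx with h2 | h2
          exacts [Or.inr h2.2, Or.inl h2.1]
        have hxq : x = q := by
          have hpn := prv_nxt hbig hxS
          rw [← h] at hpn
          rw [prv_nxt hbig hqS] at hpn
          exact hpn.symm
        rw [hxq] at hx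
        exact absurd hx.symm (hiso _)
end Combinatorial

section Key

variable {n : ℕ} [NeZero n] {G : SimpleGraph (Fin n)} {V1 V2 : Set (Fin n)}

lemma key
    (hdisj : ∀ x, x ∈ V1 → x ∈ V2 → False)
    (hbig : ∀ x : Fin n, ∃ y ∈ V1 ∪ V2, y ≠ x)
    (hbip : ∀ a b, G.Adj a b → (a ∈ V1 ∧ b ∈ V2) ∨ (b ∈ V1 ∧ a ∈ V2))
    (hconsec : ∀ a b, G.Adj a b → b = nxt (V1 ∪ V2) a ∨ a = nxt (V1 ∪ V2) b)
    (hreach : ∀ p ∈ V1, ∀ p' ∈ V1, G.Reachable p p')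
    {q : Fin n} (hq : q ∈ V2) (hiso : ∀ p, ¬ G.Adj q p)
    (hs1 : nxt (V1 ∪ V2) q ∈ V1) (hs2 : prv (V1 ∪ V2) q ∈ V1) :
    (∀ r ∈ V2, r ≠ q → G.Adj r (nxt (V1 ∪ V2) r) ∧ nxt (V1 ∪ V2) r ∈ V1) ∧
      V1.ncard = V2.ncard := by
  set S : Set (Fin n) := V1 ∪ V2 with hS
  have hqS : q ∈ S := Or.inr hq
  -- basic coordinates
  have cmax : ∀ y ∈ S, y ≠ q → dd q y ≤ dd q (prv S q) := by
    intro y hy hyne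
    have h1 := dd_antisymm hyne
    have h2 := dd_antisymm (prv_ne hbig q)
    have h3 := prv_min hbig hy hyne
    omega
  -- orientation of `nxt` steps away from `q`
  have orient : ∀ a, a ∈ S → a ≠ q → nxt S a ≠ q →
      dd q a < dd q (nxt S a) ∧ dd q (nxt S a) = dd q a + dd a (nxt S a) := by
    intro a haS hane hnane
    have h1 : dd a (nxt S a) ≤ dd a q := nxt_min hbig hqS (fun h => hane h.symm)
    have h2 : dd a (nxt S a) ≠ dd a q := fun h => hnane (dd_inj h)
    have h3 : dd a q + dd q a = n := dd_antisymm hane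
    have h4 : 0 < dd a (nxt S a) := by
      rcases Nat.eq_zero_or_pos (dd a (nxt S a)) with h | h
      · exact absurd (dd_eq_zero.mp h).symm (nxt_ne hbig a)
      · exact h
    rcases dd_cases q a (nxt S a) with h5 | h5
    · omega
    · omega
  -- there is no element of `S \ {q}` strictly between `a` and `nxt S a`
  have nostrict : ∀ a, a ∈ S → a ≠ q → nxt S a ≠ q → ∀ z ∈ S, z ≠ q →
      dd q a < dd q z → dd q z < dd q (nxt S a) → False := by
    intro a haS hane hnane z hzS hzne hz1 hz2
    obtain ⟨ho1, ho2⟩ := orient a haS hane hnane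
    have hza : z ≠ a := fun h => by rw [h] at hz1; omega
    have h6 : dd a z = dd q z - dd q a := dd_sub (le_of_lt hz1)
    have h7 : dd a z < dd a (nxt S a) := by omega
    exact absurd (nxt_min hbig hzS hza) (by omega)
  -- `nxt` of a non-maximal element is not `q`
  have nxt_ne_q : ∀ a, a ∈ S → a ≠ q → a ≠ prv S q → nxt S a ≠ q := by
    intro a haS hane hamax h
    have h2 := prv_nxt hbig haS
    rw [h] at h2
    exact hamax h2.symm
  -- the main adjacency lemma: cyclically consecutive elements of `S \ {q}` are adjacent
  have hA : ∀ s, s ∈ S → s ≠ q → s ≠ prv S q → G.Adj s (nxt S s) := by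
    intro s hsS hsne hsmax
    have hnq : nxt S s ≠ q := nxt_ne_q s hsS hsne hsmax
    have hnS : nxt S s ∈ S := nxt_mem hbig s
    obtain ⟨ho1, _⟩ := orient s hsS hsne hnq
    -- walk from `nxt S q` to `prv S q`
    have hw : G.Reachable (nxt S q) (prv S q) := hreach _ hs1 _ hs2
    refine hw.elim (fun W => ?_)
    have hcross : ∀ a b, G.Adj a b → dd q a ≤ dd q s → dd q s < dd q b → G.Adj s (nxt S s) := by
      intro a b hab h1 h2
      have hbq : b ≠ q := by
        intro h; rw [h, dd_self] at h2; omega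
      have haq : a ≠ q := fun h => hiso b (h ▸ hab)
      have haS : a ∈ S := by
        rcases hbip _ _ hab with h3 | h3
        exacts [Or.inl h3.1, Or.inr h3.2]
      rcases hconsec _ _ hab with h3 | h3
      · -- b = nxt S a
        have hanq : nxt S a ≠ q := by rw [← h3]; exact hbq
        have hamax : a ≠ prv S q := by
          intro h
          have := cmax b (by rcases hbip _ _ hab with h4 | h4; exacts [Or.inr h4.2, Or.inl h4.1]) hbq
          rw [← h] at this
          omega
        have has : a = s := by
          by_cases h4 : dd q a < dd q s
          · exact absurd (nostrict a haS haq hanq s hsS hsne h4 (by rw [← h3]; exact h2)) (fun h => h)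
          · exact dd_inj (le_antisymm (by omega) h1).symm
        -- and then nxt S a = nxt S s
        rw [has] at h3 hab
        rw [← h3]
        exact hab
      · -- a = nxt S b : impossible since dd q b > dd q a
        exfalso
        have hbS : b ∈ S := by
          rcases hbip _ _ hab with h4 | h4
          exacts [Or.inr h4.2, Or.inl h4.1]
        have hbnq : nxt S b ≠ q := by rw [← h3]; exact haq
        obtain ⟨ho, _⟩ := orient b hbS hbq hbnq
        rw [← h3] at ho
        omega
    exact walk_ivt (fun x => dd q x) (dd q s) hcross W
      (nxt_min hbig hsS hsne) (lt_of_lt_of_le ho1 (cmax _ hnS hnq))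
  -- conclusions
  have hmain : ∀ r ∈ V2, r ≠ q → G.Adj r (nxt S r) ∧ nxt S r ∈ V1 := by
    intro r hr hrne
    have hrS : r ∈ S := Or.inr hr
    have hrmax : r ≠ prv S q := fun h => hdisj r (h ▸ hs2) hr
    have hadj := hA r hrS hrne hrmax
    refine ⟨hadj, ?_⟩
    rcases hbip _ _ hadj with h | h
    · exact absurd hr (fun h2 => hdisj r h.1 h2)
    · exact h.1
  refine ⟨hmain, ?_⟩
  -- the bijection via `prv`
  have hmain' : ∀ p ∈ V1, p ≠ nxt S q → G.Adj (prv S p) p ∧ prv S p ∈ V2 ∧ prv S p ≠ q := by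
    intro p hp hpne
    have hpS : p ∈ S := Or.inl hp
    have hprq : prv S p ≠ q := by
      intro h
      apply hpne
      rw [← h]
      exact (nxt_prv hbig hpS).symm
    have hprS : prv S p ∈ S := prv_mem hbig p
    have hprmax : prv S p ≠ prv S q := by
      intro h
      have h9 := nxt_prv hbig hpS
      rw [h, nxt_prv hbig hqS] at h9
      exact hdisj p hp (h9 ▸ hq)
    have hadj := hA (prv S p) hprS hprq hprmax
    rw [nxt_prv hbig hpS] at hadj
    refine ⟨hadj, ?_, hprq⟩
    rcases hbip _ _ hadj with h | h
    · exact absurd h.2 (fun h2 => hdisj p hp h2)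
    · exact h.2
  -- counting via the bijection `prv : V1 \ {nxt S q} → V2 \ {q}`
  have himg : V2 \ {q} = (fun x => prv S x) '' (V1 \ {nxt S q}) := by
    apply Set.Subset.antisymm
    · rintro r ⟨hr, hrq⟩
      have hrq' : r ≠ q := hrq
      obtain ⟨hadj, hnr⟩ := hmain r hr hrq'
      refine ⟨nxt S r, ⟨hnr, ?_⟩, ?_⟩
      · intro h
        simp only [Set.mem_singleton_iff] at h
        apply hrq'
        have h1 := prv_nxt hbig (Or.inr hr : r ∈ S)
        rw [h, prv_nxt hbig hqS] at h1
        exact h1.symm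
      · exact prv_nxt hbig (Or.inr hr : r ∈ S)
    · rintro x ⟨p, ⟨hp, hpne⟩, rfl⟩
      have hpne' : p ≠ nxt S q := by simpa using hpne
      obtain ⟨hadj, hpv2, hprq⟩ := hmain' p hp hpne'
      exact ⟨hpv2, hprq⟩
  have hinj : Set.InjOn (fun x => prv S x) (V1 \ {nxt S q}) := by
    intro a ha b hb h
    have h1 := nxt_prv hbig (Or.inl ha.1 : a ∈ S)
    have h2 := nxt_prv hbig (Or.inl hb.1 : b ∈ S)
    simp only at h
    rw [← h1, ← h2, h]
  have hc1 : (V2 \ {q}).ncard + 1 = V2.ncard := Set.ncard_diff_singleton_add_one hq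
  have hc2 : (V1 \ {nxt S q}).ncard + 1 = V1.ncard := Set.ncard_diff_singleton_add_one hs1
  rw [himg, Set.ncard_image_of_injOn hinj] at hc1
  omega

end Key

lemma mem_of_inter_singleton {α : Type*} {C D : Set α} {p : α} (h : C ∩ D = {p}) :
    p ∈ C ∧ p ∈ D := by
  have h2 : p ∈ C ∩ D := by rw [h]; rfl
  exact h2

end Stmt8Aux

/-- if `supp v` is contained in a single component of the joint saturation
graph, then the graph is connected or almost-connected, and in the latter case the
supports have equal cardinality. -/
theorem stmt8 {m n : ℕ} [NeZero n] (A : Matrix (Fin m) (Fin n) ℝ)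
    (hstd : StandardAssumptions A) (hcirc : RowCircular A)
    (v v' : Fin n → ℝ) (hne : v ≠ v')
    (hv : IsVertex (Qstar A) v) (hv' : IsVertex (Qstar A) v')
    (hsv : ∀ p ∈ supp v, ∀ q ∈ supp v, (JSG A v v').Reachable p q) :
    (JSGConnected A v v' ∨ JSGAlmostConnected A v v') ∧
      (JSGAlmostConnected A v v' → (supp v).ncard = (supp v').ncard) := by
  classical
  open Stmt8Aux in
  obtain ⟨hbinA, hdom, hcards, hcols⟩ := hstd
  -- two distinct elements of `supp v` avoiding any given point
  have htwo : ∀ x : Fin n, ∃ y ∈ supp v, y ≠ x := by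
    intro x
    obtain ⟨t, htx⟩ := (hcols x).2
    obtain ⟨j, hAj, hvj⟩ := Stmt8Aux.vertex_cover hbinA hv t
    refine ⟨j, by simp [supp, hvj], ?_⟩
    intro h
    rw [h, htx] at hAj
    norm_num at hAj
  -- points in the common support are isolated in the JSG
  have hcommon_iso : ∀ p, p ∈ supp v → p ∈ supp v' → ∀ x, ¬ (JSG A v v').Adj p x := by
    intro p hp hp' x hadj
    obtain ⟨hne2, he⟩ := hadj
    rcases he with ⟨t, h1, h2⟩ | ⟨t, h1, h2⟩
    · have hpC : p ∈ rowSupp A t := (Stmt8Aux.mem_of_inter_singleton h1).1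
      have h3 : p ∈ rowSupp A t ∩ supp v' := ⟨hpC, hp'⟩
      rw [h2] at h3
      exact hne2 h3
    · have hpC : p ∈ rowSupp A t := (Stmt8Aux.mem_of_inter_singleton h2).1
      have h3 : p ∈ rowSupp A t ∩ supp v := ⟨hpC, hp⟩
      rw [h1] at h3
      exact hne2 h3
  -- the two supports are disjoint
  have hdisj : ∀ p, p ∈ supp v → p ∈ supp v' → False := by
    intro p hp hp'
    obtain ⟨y, hy, hyp⟩ := htwo p
    obtain ⟨x, hx⟩ := Stmt8Aux.reachable_ne_exists_adj (hsv p hp y hy) (Ne.symm hyp)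
    exact hcommon_iso p hp hp' x hx
  have hbig : ∀ x : Fin n, ∃ y ∈ supp v ∪ supp v', y ≠ x := by
    intro x
    obtain ⟨y, hy, hyx⟩ := htwo x
    exact ⟨y, Or.inl hy, hyx⟩
  -- bipartiteness of the JSG
  have hbip : ∀ a b, (JSG A v v').Adj a b →
      (a ∈ supp v ∧ b ∈ supp v') ∨ (b ∈ supp v ∧ a ∈ supp v') := by
    intro a b hadj
    obtain ⟨hne2, he⟩ := hadj
    rcases he with ⟨t, h1, h2⟩ | ⟨t, h1, h2⟩
    · exact Or.inl ⟨(Stmt8Aux.mem_of_inter_singleton h1).2,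
        (Stmt8Aux.mem_of_inter_singleton h2).2⟩
    · exact Or.inr ⟨(Stmt8Aux.mem_of_inter_singleton h1).2,
        (Stmt8Aux.mem_of_inter_singleton h2).2⟩
  -- adjacent nodes are cyclically consecutive
  have hconsec : ∀ a b, (JSG A v v').Adj a b →
      b = Stmt8Aux.nxt (supp v ∪ supp v') a ∨ a = Stmt8Aux.nxt (supp v ∪ supp v') b := by
    have hcase : ∀ x y : Fin n, x ≠ y → jsgEdge A v v' x y →
        y = Stmt8Aux.nxt (supp v ∪ supp v') x ∨ x = Stmt8Aux.nxt (supp v ∪ supp v') y := by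
      rintro x y hxy ⟨t, h1, h2⟩
      obtain ⟨i0, j0, hC⟩ := hcirc t
      have hx := Stmt8Aux.mem_of_inter_singleton h1
      have hy := Stmt8Aux.mem_of_inter_singleton h2
      have hxC : x ∈ arc i0 j0 := by rw [← hC]; exact hx.1
      have hyC : y ∈ arc i0 j0 := by rw [← hC]; exact hy.1
      have hnotS : ∀ z, z ∈ rowSupp A t → z ∈ supp v ∪ supp v' → z = x ∨ z = y := by
        intro z hz hzS
        rcases hzS with h | h
        · left
          have h3 : z ∈ rowSupp A t ∩ supp v := ⟨hz, h⟩
          rw [h1] at h3; exact h3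
        · right
          have h3 : z ∈ rowSupp A t ∩ supp v' := ⟨hz, h⟩
          rw [h2] at h3; exact h3
      rcases Stmt8Aux.arc_between hxC hyC with h | h
      · left
        have hyS : y ∈ supp v ∪ supp v' := Or.inr hy.2
        have hnm : Stmt8Aux.dd x (Stmt8Aux.nxt (supp v ∪ supp v') x) ≤ Stmt8Aux.dd x y :=
          Stmt8Aux.nxt_min hbig hyS (Ne.symm hxy)
        have hmem : Stmt8Aux.nxt (supp v ∪ supp v') x ∈ rowSupp A t := by
          rw [hC]; exact h (Stmt8Aux.mem_arc.mpr hnm)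
        rcases hnotS _ hmem (Stmt8Aux.nxt_mem hbig x) with h4 | h4
        · exact absurd h4 (Stmt8Aux.nxt_ne hbig x)
        · exact h4.symm
      · right
        have hxS : x ∈ supp v ∪ supp v' := Or.inl hx.2
        have hnm : Stmt8Aux.dd y (Stmt8Aux.nxt (supp v ∪ supp v') y) ≤ Stmt8Aux.dd y x :=
          Stmt8Aux.nxt_min hbig hxS hxy
        have hmem : Stmt8Aux.nxt (supp v ∪ supp v') y ∈ rowSupp A t := by
          rw [hC]; exact h (Stmt8Aux.mem_arc.mpr hnm)
        rcases hnotS _ hmem (Stmt8Aux.nxt_mem hbig y) with h4 | h4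
        · exact h4.symm
        · exact absurd h4 (Stmt8Aux.nxt_ne hbig y)
    intro a b hadj
    obtain ⟨hne2, he⟩ := hadj
    rcases he with h | h
    · exact hcase a b hne2 h
    · exact (hcase b a (Ne.symm hne2) h).symm
  -- every node of `supp v` has an edge
  have hniso : ∀ p ∈ supp v, ∃ x, (JSG A v v').Adj p x := by
    intro p hp
    obtain ⟨y, hy, hyp⟩ := htwo p
    exact Stmt8Aux.reachable_ne_exists_adj (hsv p hp y hy) (Ne.symm hyp)
  -- the sandwich property for isolated nodes
  have hsat : ∀ q, q ∈ supp v' → (∀ p, ¬ (JSG A v v').Adj q p) →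
      Stmt8Aux.nxt (supp v ∪ supp v') q ∈ supp v ∧
        Stmt8Aux.prv (supp v ∪ supp v') q ∈ supp v := by
    intro q hq hiso
    obtain ⟨t, ht⟩ := Stmt8Aux.vertex_minimal hbinA hv' hq
    obtain ⟨j, hAj, hvj⟩ := Stmt8Aux.vertex_cover hbinA hv t
    refine Stmt8Aux.sandwich hdisj hbig hbip hconsec hniso hq hiso (hcirc t) ht
      ⟨j, ⟨?_, ?_⟩⟩ ?_
    · show A t j ≠ 0
      rw [hAj]; norm_num
    · show v j ≠ 0
      rw [hvj]; norm_num
    · intro p hp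
      have hpv : p ∈ supp v := (Stmt8Aux.mem_of_inter_singleton hp).2
      exact ⟨fun h => hdisj p hpv (h ▸ hq), Or.inl ⟨t, hp, ht⟩⟩
  have hkey : ∀ q, q ∈ supp v' → (∀ p, ¬ (JSG A v v').Adj q p) →
      (∀ r ∈ supp v', r ≠ q →
          (JSG A v v').Adj r (Stmt8Aux.nxt (supp v ∪ supp v') r) ∧
            Stmt8Aux.nxt (supp v ∪ supp v') r ∈ supp v) ∧
        (supp v).ncard = (supp v').ncard := by
    intro q hq hiso
    obtain ⟨h1, h2⟩ := hsat q hq hiso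
    exact Stmt8Aux.key hdisj hbig hbip hconsec hsv hq hiso h1 h2
  have heq : ∀ q, q ∈ supp v' → (∀ p, ¬ (JSG A v v').Adj q p) →
      (supp v).ncard = (supp v').ncard := fun q hq hiso => (hkey q hq hiso).2
  constructor
  · by_cases hex : ∃ q ∈ supp v', ∀ p, ¬ (JSG A v v').Adj q p
    · right
      obtain ⟨q, hq, hiso⟩ := hex
      obtain ⟨hr, _⟩ := hkey q hq hiso
      obtain ⟨hn1, _⟩ := hsat q hq hiso
      refine ⟨q, Or.inr ⟨hq, fun h => hdisj q h hq⟩, hiso, ?_, ?_⟩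
      · refine ⟨Stmt8Aux.nxt (supp v ∪ supp v') q,
          Or.inl ⟨hn1, fun hh => hdisj _ hn1 hh⟩, ?_⟩
        simpa using Stmt8Aux.nxt_ne hbig q
      · intro p hp r hrr
        have hred : ∀ x, x ∈ jsgNodes v v' \ {q} →
            ∃ p' ∈ supp v, (JSG A v v').Reachable x p' := by
          rintro x ⟨hx1, hx2⟩
          rcases hx1 with ⟨hx, _⟩ | ⟨hx, _⟩
          · exact ⟨x, hx, SimpleGraph.Reachable.refl x⟩
          · have hxq : x ≠ q := by simpa using hx2
            obtain ⟨hadj, hmem⟩ := hr x hx hxq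
            exact ⟨_, hmem, hadj.reachable⟩
        obtain ⟨p1, hp1, hre1⟩ := hred p hp
        obtain ⟨p2, hp2, hre2⟩ := hred r hrr
        exact hre1.trans ((hsv p1 hp1 p2 hp2).trans hre2.symm)
    · left
      push_neg at hex
      intro p hp r hrr
      have hred : ∀ x, x ∈ jsgNodes v v' →
          ∃ p' ∈ supp v, (JSG A v v').Reachable x p' := by
        rintro x hx
        rcases hx with ⟨hx, _⟩ | ⟨hx, _⟩
        · exact ⟨x, hx, SimpleGraph.Reachable.refl x⟩
        · obtain ⟨y, hy⟩ := hex x hx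
          rcases hbip x y hy with h | h
          · exact absurd h.1 (fun h2 => hdisj x h2 hx)
          · exact ⟨y, h.1, hy.reachable⟩
      obtain ⟨p1, hp1, hre1⟩ := hred p hp
      obtain ⟨p2, hp2, hre2⟩ := hred r hrr
      exact hre1.trans ((hsv p1 hp1 p2 hp2).trans hre2.symm)
  · intro halm
    obtain ⟨q, hqn, hiso, _, _⟩ := halm
    have hq : q ∈ supp v' := by
      rcases hqn with ⟨hq1, _⟩ | ⟨hq1, _⟩
      · exfalso
        obtain ⟨x, hx⟩ := hniso q hq1
        exact hiso x hx
      · exact hq1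
    exact heq q hq hiso
end

section
/- For n odd, let v and v' be distinct binary vertices of Q(C(n,2)). Then the joint saturation graph G(v,v') contains no cycles; equivalently, for i and j in the same component, exactly one of the cyclic sequences i, i+1, …, j or j, j+1, …, i is a path of G(v,v'). -/
open Finset

open Fin.NatCast Fin.CommRing

lemma jsg_edge_struct {n : ℕ} [NeZero n] {v v' : Fin n → ℝ} {p q : Fin n}
    (hpq : p ≠ q) (h : jsgEdge (Cn2 n) v v' p q) :
    (q = p + 1 ∨ p = q + 1) ∧ v p ≠ 0 ∧ v q = 0 := by
  obtain ⟨t, h1, h2⟩ := h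
  have hrow : ∀ j, j ∈ rowSupp (Cn2 n) t ↔ (j = t ∨ j = t + 1) := by
    intro j
    simp only [rowSupp, Cn2, Set.mem_setOf_eq]
    split_ifs with hj <;> simp [hj]
  have hp : p ∈ rowSupp (Cn2 n) t ∩ supp v := h1 ▸ rfl
  have hq : q ∈ rowSupp (Cn2 n) t ∩ supp v' := h2 ▸ rfl
  have hvq : v q = 0 := by
    by_contra hvq
    have : q ∈ rowSupp (Cn2 n) t ∩ supp v := ⟨hq.1, hvq⟩
    rw [h1] at this
    exact hpq this.symm
  refine ⟨?_, hp.2, hvq⟩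
  rcases (hrow p).mp hp.1 with hp' | hp' <;> rcases (hrow q).mp hq.1 with hq' | hq'
  · exact absurd (hp'.trans hq'.symm) hpq
  · exact Or.inl (by rw [hq', hp'])
  · exact Or.inr (by rw [hp', hq'])
  · exact absurd (hp'.trans hq'.symm) hpq

lemma jsg_adj_struct {n : ℕ} [NeZero n] {v v' : Fin n → ℝ} {p q : Fin n}
    (h : (JSG (Cn2 n) v v').Adj p q) :
    (q = p + 1 ∨ p = q + 1) ∧ (v p = 0 ↔ v q ≠ 0) := by
  obtain ⟨hne, hE | hE⟩ := h
  · obtain ⟨hdir, hvp, hvq⟩ := jsg_edge_struct hne hE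
    exact ⟨hdir, by tauto⟩
  · obtain ⟨hdir, hvq, hvp⟩ := jsg_edge_struct hne.symm hE
    exact ⟨by tauto, by tauto⟩

lemma walk_support_getElem? {V : Type*} {G : SimpleGraph V} {u w : V} (c : G.Walk u w) :
    ∀ (k : ℕ), k ≤ c.length → c.support[k]? = some (c.getVert k) := by
  induction c with
  | nil => intro k hk; simp only [SimpleGraph.Walk.length_nil, Nat.le_zero] at hk; subst hk; simp
  | cons h p ih =>
    intro k hk
    cases k with
    | zero => simp
    | succ k =>
      rw [SimpleGraph.Walk.support_cons]
      simpa using ih k (by simpa using hk)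

/-- for `n` odd, the joint saturation graph of two distinct binary
vertices of `Q(C(n,2))` contains no cycles. -/
theorem stmt14 {n : ℕ} [NeZero n] (hodd : Odd n)
    (v v' : Fin n → ℝ) (hne : v ≠ v')
    (hbv : IsBinaryVec v) (hbv' : IsBinaryVec v')
    (hv : IsVertex (polyQ (Cn2 n)) v) (hv' : IsVertex (polyQ (Cn2 n)) v') :
    (JSG (Cn2 n) v v').IsAcyclic := by
  intro u c hc
  have h3 : 3 ≤ c.length := hc.three_le_length
  set f : ℕ → Fin n := fun k => c.getVert k with hf
  have hf0 : f 0 = u := c.getVert_zero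
  have hflen : f c.length = u := c.getVert_length
  have hadj : ∀ k, k < c.length → (JSG (Cn2 n) v v').Adj (f k) (f (k + 1)) :=
    fun k hk => c.adj_getVert_succ hk
  have htaillen : c.support.tail.length = c.length := by
    simp [SimpleGraph.Walk.length_support]
  have htail : ∀ k, k < c.length → c.support.tail[k]? = some (f (k + 1)) := by
    intro k hk
    have h1 : c.support[k + 1]? = some (f (k + 1)) := walk_support_getElem? c (k + 1) (by omega)
    rw [SimpleGraph.Walk.support_eq_cons] at h1
    simpa using h1
  -- injectivity except at the endpoints
  have hinj : ∀ i j, i < j → j ≤ c.length → f i = f j → i = 0 ∧ j = c.length := by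
    intro i j hij hjlen heq
    rcases Nat.eq_zero_or_pos i with rfl | hi
    · rcases eq_or_lt_of_le hjlen with rfl | hjlt
      · exact ⟨rfl, rfl⟩
      · exfalso
        have e1 : c.support.tail[j - 1]? = some u := by
          have := htail (j - 1) (by omega)
          rw [Nat.sub_add_cancel (by omega)] at this
          rw [this, ← heq, hf0]
        have e2 : c.support.tail[c.length - 1]? = some u := by
          have := htail (c.length - 1) (by omega)
          rw [Nat.sub_add_cancel (by omega)] at this
          rw [this, hflen]
        have := (List.getElem?_inj (by omega : j - 1 < c.support.tail.length)
          hc.support_nodup).mp (e1.trans e2.symm)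
        omega
    · have e1 : c.support.tail[i - 1]? = some (f i) := by
        have := htail (i - 1) (by omega)
        rwa [Nat.sub_add_cancel (by omega)] at this
      have e2 : c.support.tail[j - 1]? = some (f i) := by
        have := htail (j - 1) (by omega)
        rw [Nat.sub_add_cancel (by omega)] at this
        rw [this, heq]
      have := (List.getElem?_inj (by omega : i - 1 < c.support.tail.length)
        hc.support_nodup).mp (e1.trans e2.symm)
      omega
  have hstep : ∀ k, k < c.length → f (k + 1) = f k + 1 ∨ f (k + 1) = f k - 1 := by
    intro k hk
    rcases (jsg_adj_struct (hadj k hk)).1 with h | h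
    · exact Or.inl h
    · exact Or.inr (by rw [h]; ring)
  have hflip : ∀ k, k < c.length → (v (f k) = 0 ↔ v (f (k + 1)) ≠ 0) :=
    fun k hk => (jsg_adj_struct (hadj k hk)).2
  obtain ⟨d, hd, hstep0⟩ : ∃ d : Fin n, (d = 1 ∨ d = -1) ∧ f 1 = f 0 + d := by
    rcases hstep 0 (by omega) with h | h
    · exact ⟨1, Or.inl rfl, h⟩
    · exact ⟨-1, Or.inr rfl, by rw [h]; ring⟩
  by_cases hall : ∀ k, k < c.length → f (k + 1) = f k + d
  · -- monotone case: full cycle, length n, parity contradiction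
    have hform : ∀ k, k ≤ c.length → f k = u + (k : Fin n) * d := by
      intro k
      induction k with
      | zero => intro _; simp [hf0]
      | succ k ih =>
        intro hk
        rw [hall k (by omega), ih (by omega)]
        push_cast
        ring
    have hzero : (c.length : Fin n) = 0 := by
      have h1 : u + (c.length : Fin n) * d = u := by
        rw [← hform c.length le_rfl, hflen]
      have h2 : (c.length : Fin n) * d = 0 := by
        have := add_left_cancel (h1.trans (add_zero u).symm)
        exact this
      rcases hd with rfl | rfl
      · simpa using h2
      · simpa using h2
    have hdvd : n ∣ c.length := Fin.natCast_eq_zero.mp hzero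
    have hnpos : 0 < n := Nat.pos_of_ne_zero (NeZero.ne n)
    have hnle : n ≤ c.length := Nat.le_of_dvd (by omega) hdvd
    have hlen : c.length = n := by
      by_contra hne'
      have hnlt : n < c.length := lt_of_le_of_ne hnle fun h => hne' h.symm
      have : f n = u := by
        rw [hform n (by omega), Fin.natCast_self, zero_mul, add_zero]
      have := hinj 0 n hnpos (by omega) (hf0.trans this.symm)
      omega
    have hpar : ∀ k, k ≤ c.length → (v (f k) = 0 ↔ (Even k ↔ v u = 0)) := by
      intro k
      induction k with
      | zero => intro _; rw [hf0]; tauto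
      | succ k ih =>
        intro hk
        have h1 := hflip k (by omega)
        have h2 := ih (by omega)
        rw [Nat.even_add_one]
        tauto
    have hfin := hpar c.length le_rfl
    rw [hflen, hlen] at hfin
    have hnotev : ¬ Even n := Nat.not_even_iff_odd.mpr hodd
    tauto
  · -- there is a turn
    have hex : ∃ k, k < c.length ∧ f (k + 1) ≠ f k + d := by
      push_neg at hall
      exact hall
    obtain ⟨k₀, hk₀min, hk₀lt, hk₀ne⟩ :
        ∃ k₀, (∀ m, m < k₀ → ¬(m < c.length ∧ f (m + 1) ≠ f m + d)) ∧
          k₀ < c.length ∧ f (k₀ + 1) ≠ f k₀ + d :=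
      ⟨Nat.find hex, fun m hm => Nat.find_min hex hm, (Nat.find_spec hex).1,
        (Nat.find_spec hex).2⟩
    have hk₀pos : 0 < k₀ := by
      rcases Nat.eq_zero_or_pos k₀ with rfl | h
      · exact absurd hstep0 hk₀ne
      · exact h
    have hprev : f k₀ = f (k₀ - 1) + d := by
      have hmin := hk₀min (k₀ - 1) (by omega)
      push_neg at hmin
      have := hmin (by omega)
      rwa [Nat.sub_add_cancel (by omega)] at this
    have hnext : f (k₀ + 1) = f k₀ - d := by
      rcases hstep k₀ hk₀lt with h | h
      · rcases hd with rfl | rfl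
        · exact absurd h hk₀ne
        · rw [h]; ring
      · rcases hd with rfl | rfl
        · exact h
        · exact absurd (by rw [h]; ring) hk₀ne
    have heq : f (k₀ - 1) = f (k₀ + 1) := by
      rw [hnext, hprev]
      ring
    have := hinj (k₀ - 1) (k₀ + 1) (by omega) (by omega) heq
    omega
end

section
/- Let n ≥ 9 be odd and let i < j < l in {1,…,n} with j − i ≥ 3 odd, l − j ≥ 3 odd, and (i,l) ≠ (1,n). If v and v' are distinct binary vertices of Q(C(n,2)) with v'_i = v'_j = v'_l = 0, then every connected component of the joint saturation graph G(v,v') contains at most one element of {i,j,l}. -/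
open Finset

open scoped Fin.NatCast Fin.IntCast Fin.CommRing

lemma mem_rowSupp_Cn2 {n : ℕ} [NeZero n] (t x : Fin n) :
    x ∈ rowSupp (Cn2 n) t ↔ x = t ∨ x = t + 1 := by
  by_cases h : x = t ∨ x = t + 1 <;> simp [rowSupp, Cn2, h] <;> tauto

lemma edge_props {n : ℕ} [NeZero n] {v v' : Fin n → ℝ} {a b : Fin n}
    (hab : a ≠ b) (h : jsgEdge (Cn2 n) v v' a b) :
    (b = a + 1 ∨ a = b + 1) ∧ v' a = 0 ∧ v' b ≠ 0 := by
  obtain ⟨t, h1, h2⟩ := h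
  have ha : a ∈ rowSupp (Cn2 n) t ∩ supp v := h1.ge rfl
  have hb : b ∈ rowSupp (Cn2 n) t ∩ supp v' := h2.ge rfl
  have hb' : v' b ≠ 0 := hb.2
  have hva : v' a = 0 := by
    by_contra hva
    have hmem : a ∈ rowSupp (Cn2 n) t ∩ supp v' := ⟨ha.1, hva⟩
    rw [h2] at hmem
    exact hab hmem
  refine ⟨?_, hva, hb'⟩
  have hma := (mem_rowSupp_Cn2 t a).mp ha.1
  have hmb := (mem_rowSupp_Cn2 t b).mp hb.1
  rcases hma with rfl | rfl
  · rcases hmb with rfl | rfl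
    · exact absurd rfl hab
    · exact Or.inl rfl
  · rcases hmb with rfl | rfl
    · exact Or.inr rfl
    · exact absurd rfl hab

lemma adj_struct {n : ℕ} [NeZero n] {v v' : Fin n → ℝ} {p q : Fin n}
    (h : (JSG (Cn2 n) v v').Adj p q) :
    (q = p + 1 ∨ p = q + 1) ∧ (v' p = 0 ↔ ¬ v' q = 0) := by
  obtain ⟨hne, hE | hE⟩ := h
  · obtain ⟨hor, h0, h1⟩ := edge_props hne hE
    exact ⟨hor, iff_of_true h0 h1⟩
  · obtain ⟨hor, h0, h1⟩ := edge_props (Ne.symm hne) hE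
    exact ⟨hor.symm, iff_of_false h1 (not_not_intro h0)⟩

lemma fin_shift_eq {n : ℕ} [NeZero n] (a b : Fin n) (k m : ℕ)
    (h : ((a : ℕ) + k) % n = ((b : ℕ) + m) % n) :
    a + (k : Fin n) = b + (m : Fin n) := by
  apply Fin.val_injective
  rw [Fin.val_add, Fin.val_add, Fin.val_natCast, Fin.val_natCast]
  rw [Nat.add_mod (a : ℕ) k, Nat.add_mod (b : ℕ) m,
    Nat.mod_eq_of_lt a.isLt, Nat.mod_eq_of_lt b.isLt] at h
  exact h

lemma fin_shift {n : ℕ} [NeZero n] (a b : Fin n) (k : ℕ)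
    (h : ((a : ℕ) + k) % n = (b : ℕ)) : a + (k : Fin n) = b := by
  have h2 := fin_shift_eq a b k 0
    (by rw [Nat.add_zero, Nat.mod_eq_of_lt b.isLt]; exact h)
  simpa using h2

lemma cut_exists {n : ℕ} [NeZero n] (v v' : Fin n → ℝ) (s : Fin n) (m : ℕ) (hm : Odd m)
    (hs : v' s = 0) (hsm : v' (s + (m : Fin n)) = 0) :
    ∃ k, k < m ∧ ¬ (JSG (Cn2 n) v v').Adj (s + (k : Fin n)) (s + (k : Fin n) + 1) := by
  by_contra hcon
  push_neg at hcon
  have key : ∀ k, k ≤ m → (v' (s + (k : Fin n)) = 0 ↔ Even k) := by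
    intro k
    induction k with
    | zero => intro _; simpa using hs
    | succ k ih =>
      intro hk
      have hadj := hcon k (by omega)
      have hflip := (adj_struct hadj).2
      have hcast : s + ((k + 1 : ℕ) : Fin n) = s + (k : Fin n) + 1 := by push_cast; ring
      rw [hcast, Nat.even_add_one, ← ih (by omega)]
      tauto
  have hev := (key m le_rfl).mp hsm
  rw [Nat.even_iff] at hev
  rw [Nat.odd_iff] at hm
  omega

lemma sep {n : ℕ} [NeZero n] {v v' : Fin n → ℝ} (hn : 2 ≤ n) (c : Fin n) (D dp dq : ℕ)
    (hpD : dp ≤ D) (hDq : D < dq) (hq : dq < n)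
    (h1 : ¬ (JSG (Cn2 n) v v').Adj (c + (D : Fin n)) (c + (D : Fin n) + 1))
    (h2 : ¬ (JSG (Cn2 n) v v').Adj (c - 1) c) :
    ¬ (JSG (Cn2 n) v v').Reachable (c + (dp : Fin n)) (c + (dq : Fin n)) := by
  have hone : ((1 : Fin n) : ℕ) = 1 := by
    rw [← Nat.cast_one, Fin.val_natCast, Nat.mod_eq_of_lt (by omega : 1 < n)]
  have hneg : ((-1 : Fin n) : ℕ) = n - 1 := by
    have h1n : ((n - 1 : ℕ) : Fin n) = -1 := by
      rw [Nat.cast_sub (by omega : 1 ≤ n), Fin.natCast_self, Nat.cast_one]; ring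
    rw [← h1n, Fin.val_natCast, Nat.mod_eq_of_lt (by omega)]
  have hdc : ∀ k : ℕ, k < n → (((c + (k : Fin n)) - c : Fin n) : ℕ) = k := by
    intro k hk
    rw [add_sub_cancel_left, Fin.val_natCast, Nat.mod_eq_of_lt hk]
  have hup : ∀ x : Fin n, x ≠ c - 1 →
      (((x + 1) - c : Fin n) : ℕ) = ((x - c : Fin n) : ℕ) + 1 := by
    intro x hx
    have hne : x - c ≠ -1 := by
      intro h
      apply hx
      rw [sub_eq_iff_eq_add] at h
      rw [h]; ring
    have hlt : ((x - c : Fin n) : ℕ) < n - 1 := by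
      have hl1 : ((x - c : Fin n) : ℕ) < n := (x - c).isLt
      rcases Nat.lt_or_ge ((x - c : Fin n) : ℕ) (n - 1) with h | h
      · exact h
      · exact absurd (Fin.val_injective (by rw [hneg]; omega)) hne
    have heq : x + 1 - c = (x - c) + 1 := by ring
    rw [heq, Fin.val_add, hone, Nat.mod_eq_of_lt (by omega)]
  have hstep : ∀ x y : Fin n, (JSG (Cn2 n) v v').Adj x y →
      ((x - c : Fin n) : ℕ) ≤ D → ((y - c : Fin n) : ℕ) ≤ D := by
    intro x y hxy hxD
    rcases (adj_struct hxy).1 with rfl | rfl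
    · have hx1 : x ≠ c - 1 := by
        rintro rfl
        apply h2
        have he : c - 1 + 1 = c := by ring
        rwa [he] at hxy
      have hxb : ((x - c : Fin n) : ℕ) ≠ D := by
        intro hEq
        apply h1
        have h3 : ((x - c : Fin n) : ℕ) = (((c + (D : Fin n)) - c : Fin n) : ℕ) := by
          rw [hdc D (by omega), hEq]
        have h4 : x - c = (c + (D : Fin n)) - c := Fin.val_injective h3
        have h5 : x = c + (D : Fin n) := by
          have h6 := congrArg (· + c) h4
          simp only [sub_add_cancel] at h6
          rw [h6, add_comm]
        rwa [h5] at hxy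
      have hu := hup x hx1
      omega
    · have hy1 : y ≠ c - 1 := by
        rintro rfl
        apply h2
        have he : c - 1 + 1 = c := by ring
        have hs := hxy.symm
        rwa [he] at hs
      have hu := hup y hy1
      omega
  intro hr
  obtain ⟨w⟩ := hr
  have key : ∀ (a b : Fin n) (w : (JSG (Cn2 n) v v').Walk a b),
      ((a - c : Fin n) : ℕ) ≤ D → ((b - c : Fin n) : ℕ) ≤ D := by
    intro a b w
    induction w with
    | nil => exact id
    | cons h p ih => exact fun ha => ih (hstep _ _ h ha)
  have h5 := key _ _ w (by rw [hdc dp (by omega)]; omega)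
  rw [hdc dq hq] at h5
  omega

/-- every component of the joint saturation graph contains at most one of
the three positions `i, j, l` (1-based positions correspond to `0`-based `Fin n`
values; `(i,l) ≠ (1,n)` becomes `¬(i = 0 ∧ l = n-1)`). -/
theorem stmt15 {n : ℕ} [NeZero n] (hn : 9 ≤ n) (hodd : Odd n)
    (i j l : Fin n) (hij : (i : ℕ) < j) (hjl : (j : ℕ) < l)
    (h3ij : 3 ≤ (j : ℕ) - i) (hoij : Odd ((j : ℕ) - i))
    (h3jl : 3 ≤ (l : ℕ) - j) (hojl : Odd ((l : ℕ) - j))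
    (hend : ¬ ((i : ℕ) = 0 ∧ (l : ℕ) = n - 1))
    (v v' : Fin n → ℝ) (hne : v ≠ v')
    (hbv : IsBinaryVec v) (hbv' : IsBinaryVec v')
    (hv : IsVertex (polyQ (Cn2 n)) v) (hv' : IsVertex (polyQ (Cn2 n)) v')
    (h0 : v' i = 0 ∧ v' j = 0 ∧ v' l = 0) :
    ¬ (JSG (Cn2 n) v v').Reachable i j ∧ ¬ (JSG (Cn2 n) v v').Reachable j l ∧
      ¬ (JSG (Cn2 n) v v').Reachable i l := by
  obtain ⟨h0i, h0j, h0l⟩ := h0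
  have hIn : (i : ℕ) < n := i.isLt
  have hJn : (j : ℕ) < n := j.isLt
  have hLn : (l : ℕ) < n := l.isLt
  have hn2 : 2 ≤ n := by omega
  have hoij' := Nat.odd_iff.mp hoij
  have hojl' := Nat.odd_iff.mp hojl
  have hodd' := Nat.odd_iff.mp hodd
  have e_ij : i + (((j : ℕ) - i : ℕ) : Fin n) = j :=
    fin_shift _ _ _ (by
      rw [show (i : ℕ) + ((j : ℕ) - i) = (j : ℕ) from by omega, Nat.mod_eq_of_lt hJn])
  have e_jl : j + (((l : ℕ) - j : ℕ) : Fin n) = l :=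
    fin_shift _ _ _ (by
      rw [show (j : ℕ) + ((l : ℕ) - j) = (l : ℕ) from by omega, Nat.mod_eq_of_lt hLn])
  have e_li : l + ((n - ((l : ℕ) - i) : ℕ) : Fin n) = i :=
    fin_shift _ _ _ (by
      rw [show (l : ℕ) + (n - ((l : ℕ) - i)) = n + (i : ℕ) from by omega,
        Nat.add_mod_left, Nat.mod_eq_of_lt hIn])
  obtain ⟨k1, hk1, hcut1⟩ := cut_exists v v' i ((j : ℕ) - i) hoij h0i (by rw [e_ij]; exact h0j)
  obtain ⟨kA, hkA, hcutA⟩ := cut_exists v v' j ((l : ℕ) - j) hojl h0j (by rw [e_jl]; exact h0l)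
  obtain ⟨kB, hkB, hcutB⟩ := cut_exists v v' l (n - ((l : ℕ) - i))
    (by rw [Nat.odd_iff]; omega) h0l (by rw [e_li]; exact h0i)
  refine ⟨?_, ?_, ?_⟩
  · -- i to j : cuts at i + k1 (in [i,j)) and j + kA (in [j,i) cyclically, since kA < l - j)
    set dp := n - ((j : ℕ) - i) - (kA + 1) with hdp
    have e1 : (j + ((kA + 1 : ℕ) : Fin n)) + ((dp : ℕ) : Fin n) = i := by
      rw [add_assoc, ← Nat.cast_add]
      exact fin_shift _ _ _ (by
        rw [show (j : ℕ) + ((kA + 1) + dp) = n + (i : ℕ) from by omega,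
          Nat.add_mod_left, Nat.mod_eq_of_lt hIn])
    have e2 : (j + ((kA + 1 : ℕ) : Fin n)) + ((dp + ((j : ℕ) - i) : ℕ) : Fin n) = j := by
      rw [add_assoc, ← Nat.cast_add]
      exact fin_shift _ _ _ (by
        rw [show (j : ℕ) + ((kA + 1) + (dp + ((j : ℕ) - i))) = n + (j : ℕ) from by omega,
          Nat.add_mod_left, Nat.mod_eq_of_lt hJn])
    have e3 : (j + ((kA + 1 : ℕ) : Fin n)) + ((dp + k1 : ℕ) : Fin n) = i + (k1 : Fin n) := by
      rw [add_assoc, ← Nat.cast_add]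
      exact fin_shift_eq _ _ _ _ (by
        rw [show (j : ℕ) + ((kA + 1) + (dp + k1)) = n + ((i : ℕ) + k1) from by omega,
          Nat.add_mod_left])
    have ec : j + ((kA + 1 : ℕ) : Fin n) = (j + ((kA : ℕ) : Fin n)) + 1 := by push_cast; ring
    have h2 : ¬ (JSG (Cn2 n) v v').Adj ((j + ((kA + 1 : ℕ) : Fin n)) - 1)
        (j + ((kA + 1 : ℕ) : Fin n)) := by
      rw [ec, show (j + ((kA : ℕ) : Fin n)) + 1 - 1 = j + ((kA : ℕ) : Fin n) from by ring]
      exact hcutA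
    have h1 : ¬ (JSG (Cn2 n) v v').Adj
        ((j + ((kA + 1 : ℕ) : Fin n)) + ((dp + k1 : ℕ) : Fin n))
        ((j + ((kA + 1 : ℕ) : Fin n)) + ((dp + k1 : ℕ) : Fin n) + 1) := by
      rw [e3]; exact hcut1
    have hres := sep hn2 (j + ((kA + 1 : ℕ) : Fin n)) (dp + k1) dp (dp + ((j : ℕ) - i))
      (Nat.le_add_right _ _) (by omega) (by omega) h1 h2
    rw [e1, e2] at hres
    exact hres
  · -- j to l : cuts at j + kA (in [j,l)) and l + kB (in [l,j) cyclically)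
    set dp := n - ((l : ℕ) - j) - (kB + 1) with hdp
    have e1 : (l + ((kB + 1 : ℕ) : Fin n)) + ((dp : ℕ) : Fin n) = j := by
      rw [add_assoc, ← Nat.cast_add]
      exact fin_shift _ _ _ (by
        rw [show (l : ℕ) + ((kB + 1) + dp) = n + (j : ℕ) from by omega,
          Nat.add_mod_left, Nat.mod_eq_of_lt hJn])
    have e2 : (l + ((kB + 1 : ℕ) : Fin n)) + ((dp + ((l : ℕ) - j) : ℕ) : Fin n) = l := by
      rw [add_assoc, ← Nat.cast_add]
      exact fin_shift _ _ _ (by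
        rw [show (l : ℕ) + ((kB + 1) + (dp + ((l : ℕ) - j))) = n + (l : ℕ) from by omega,
          Nat.add_mod_left, Nat.mod_eq_of_lt hLn])
    have e3 : (l + ((kB + 1 : ℕ) : Fin n)) + ((dp + kA : ℕ) : Fin n) = j + (kA : Fin n) := by
      rw [add_assoc, ← Nat.cast_add]
      exact fin_shift_eq _ _ _ _ (by
        rw [show (l : ℕ) + ((kB + 1) + (dp + kA)) = n + ((j : ℕ) + kA) from by omega,
          Nat.add_mod_left])
    have ec : l + ((kB + 1 : ℕ) : Fin n) = (l + ((kB : ℕ) : Fin n)) + 1 := by push_cast; ring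
    have h2 : ¬ (JSG (Cn2 n) v v').Adj ((l + ((kB + 1 : ℕ) : Fin n)) - 1)
        (l + ((kB + 1 : ℕ) : Fin n)) := by
      rw [ec, show (l + ((kB : ℕ) : Fin n)) + 1 - 1 = l + ((kB : ℕ) : Fin n) from by ring]
      exact hcutB
    have h1 : ¬ (JSG (Cn2 n) v v').Adj
        ((l + ((kB + 1 : ℕ) : Fin n)) + ((dp + kA : ℕ) : Fin n))
        ((l + ((kB + 1 : ℕ) : Fin n)) + ((dp + kA : ℕ) : Fin n) + 1) := by
      rw [e3]; exact hcutA
    have hres := sep hn2 (l + ((kB + 1 : ℕ) : Fin n)) (dp + kA) dp (dp + ((l : ℕ) - j))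
      (Nat.le_add_right _ _) (by omega) (by omega) h1 h2
    rw [e1, e2] at hres
    exact hres
  · -- i to l : cuts at i + k1 (in [i,l)) and l + kB (in [l,i) cyclically)
    set dp := n - ((l : ℕ) - i) - (kB + 1) with hdp
    have e1 : (l + ((kB + 1 : ℕ) : Fin n)) + ((dp : ℕ) : Fin n) = i := by
      rw [add_assoc, ← Nat.cast_add]
      exact fin_shift _ _ _ (by
        rw [show (l : ℕ) + ((kB + 1) + dp) = n + (i : ℕ) from by omega,
          Nat.add_mod_left, Nat.mod_eq_of_lt hIn])
    have e2 : (l + ((kB + 1 : ℕ) : Fin n)) + ((dp + ((l : ℕ) - i) : ℕ) : Fin n) = l := by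
      rw [add_assoc, ← Nat.cast_add]
      exact fin_shift _ _ _ (by
        rw [show (l : ℕ) + ((kB + 1) + (dp + ((l : ℕ) - i))) = n + (l : ℕ) from by omega,
          Nat.add_mod_left, Nat.mod_eq_of_lt hLn])
    have e3 : (l + ((kB + 1 : ℕ) : Fin n)) + ((dp + k1 : ℕ) : Fin n) = i + (k1 : Fin n) := by
      rw [add_assoc, ← Nat.cast_add]
      exact fin_shift_eq _ _ _ _ (by
        rw [show (l : ℕ) + ((kB + 1) + (dp + k1)) = n + ((i : ℕ) + k1) from by omega,
          Nat.add_mod_left])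
    have ec : l + ((kB + 1 : ℕ) : Fin n) = (l + ((kB : ℕ) : Fin n)) + 1 := by push_cast; ring
    have h2 : ¬ (JSG (Cn2 n) v v').Adj ((l + ((kB + 1 : ℕ) : Fin n)) - 1)
        (l + ((kB + 1 : ℕ) : Fin n)) := by
      rw [ec, show (l + ((kB : ℕ) : Fin n)) + 1 - 1 = l + ((kB : ℕ) : Fin n) from by ring]
      exact hcutB
    have h1 : ¬ (JSG (Cn2 n) v v').Adj
        ((l + ((kB + 1 : ℕ) : Fin n)) + ((dp + k1 : ℕ) : Fin n))
        ((l + ((kB + 1 : ℕ) : Fin n)) + ((dp + k1 : ℕ) : Fin n) + 1) := by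
      rw [e3]; exact hcut1
    have hres := sep hn2 (l + ((kB + 1 : ℕ) : Fin n)) (dp + k1) dp (dp + ((l : ℕ) - i))
      (Nat.le_add_right _ _) (by omega) (by omega) h1 h2
    rw [e1, e2] at hres
    exact hres
end

section
/- Let A be a minimally nonideal binary matrix not isomorphic to any degenerate projective plane matrix J_t, with core A₁ having r ones per row and blocker core B₁ having s ones per row. If v and v' are binary vertices of Q(A) with v·1 = v'·1 = s, then v and v' are adjacent in Q*(A); moreover, they are adjacent in Q(A) if and only if supp(v) ∪ supp(v') ≠ {1,…,n}. -/
open Finset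

section AuxStmt19

open Finset

variable {m n : ℕ} {A : Matrix (Fin m) (Fin n) ℝ} {B₁ : Matrix (Fin n) (Fin n) ℝ} {s : ℕ}

/-- The generator set of `Qstar`. -/
def covSet {m n : ℕ} (A : Matrix (Fin m) (Fin n) ℝ) : Set (Fin n → ℝ) :=
  {x | (∀ j, ∃ k : ℕ, x j = k) ∧ ∀ i, 1 ≤ ∑ j, A i j * x j}

lemma Qstar_eq : Qstar A = convexHull ℝ (covSet A) := rfl

lemma entry_nonneg (hA : IsBinaryMatrix A) (t : Fin m) (j : Fin n) : 0 ≤ A t j := by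
  rcases hA t j with h | h <;> rw [h] <;> norm_num

lemma rowSupp_eq_coe (t : Fin m) :
    rowSupp A t = ↑(univ.filter fun j => A t j ≠ 0) := by
  ext j; simp [rowSupp]

lemma rowSupp_ncard_eq (t : Fin m) :
    (rowSupp A t).ncard = (univ.filter fun j => A t j ≠ 0).card := by
  rw [rowSupp_eq_coe, Set.ncard_coe_finset]

lemma rowSum_eq (hA : IsBinaryMatrix A) (t : Fin m) (x : Fin n → ℝ) :
    ∑ j, A t j * x j = ∑ j ∈ univ.filter (fun j => A t j ≠ 0), x j := by
  rw [← Finset.sum_filter_add_sum_filter_not univ (fun j => A t j ≠ 0) (fun j => A t j * x j)]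
  have h1 : ∑ j ∈ univ.filter (fun j => ¬ A t j ≠ 0), A t j * x j = 0 := by
    apply Finset.sum_eq_zero; intro j hj
    simp only [Finset.mem_filter, not_not] at hj
    rw [hj.2, zero_mul]
  have h2 : ∑ j ∈ univ.filter (fun j => A t j ≠ 0), A t j * x j
      = ∑ j ∈ univ.filter (fun j => A t j ≠ 0), x j := by
    apply Finset.sum_congr rfl; intro j hj
    simp only [Finset.mem_filter] at hj
    rcases hA t j with h | h
    · exact absurd h hj.2
    · rw [h, one_mul]
  rw [h1, h2, add_zero]

lemma binary_sum_eq_card {x : Fin n → ℝ} (hx : IsBinaryVec x) :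
    ∑ j, x j = ((univ.filter fun j => x j ≠ 0).card : ℝ) := by
  rw [← Finset.sum_filter_add_sum_filter_not univ (fun j => x j ≠ 0) x]
  have h1 : ∑ j ∈ univ.filter (fun j => ¬ x j ≠ 0), x j = 0 := by
    apply Finset.sum_eq_zero; intro j hj
    simp only [Finset.mem_filter, not_not] at hj; exact hj.2
  have h2 : ∑ j ∈ univ.filter (fun j => x j ≠ 0), x j
      = ((univ.filter fun j => x j ≠ 0).card : ℝ) := by
    rw [Finset.card_eq_sum_ones, Nat.cast_sum]
    apply Finset.sum_congr rfl; intro j hj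
    simp only [Finset.mem_filter] at hj
    rcases hx j with h | h
    · exact absurd h hj.2
    · rw [h]; norm_num
  rw [h1, h2, add_zero]

lemma supp_ncard_eq (x : Fin n → ℝ) :
    (supp x).ncard = (univ.filter fun j => x j ≠ 0).card := by
  have : supp x = ↑(univ.filter fun j => x j ≠ 0) := by ext j; simp [supp]
  rw [this, Set.ncard_coe_finset]

lemma binary_sum_eq_supp_ncard {x : Fin n → ℝ} (hx : IsBinaryVec x) :
    ∑ j, x j = ((supp x).ncard : ℝ) := by
  rw [binary_sum_eq_card hx, supp_ncard_eq]

lemma covSet_nonneg {x : Fin n → ℝ} (hx : ∀ j, ∃ k : ℕ, x j = k) (j : Fin n) : 0 ≤ x j := by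
  obtain ⟨k, hk⟩ := hx j; rw [hk]; positivity

lemma covSet_coord_cases {x : Fin n → ℝ} (hx : ∀ j, ∃ k : ℕ, x j = k) (j : Fin n) :
    x j = 0 ∨ 1 ≤ x j := by
  obtain ⟨k, hk⟩ := hx j
  rcases Nat.eq_zero_or_pos k with h | h
  · left; rw [hk, h]; norm_num
  · right; rw [hk]; exact_mod_cast h

lemma Qstar_nonneg {x : Fin n → ℝ} (hx : x ∈ Qstar A) (j : Fin n) : 0 ≤ x j := by
  have : Qstar A ⊆ {y : Fin n → ℝ | ∀ j, 0 ≤ y j} := by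
    apply convexHull_min
    · intro y hy j; exact covSet_nonneg hy.1 j
    · intro u hu v hv a b ha hb hab j
      have heq : (a • u + b • v) j = a * u j + b * v j := by simp
      rw [Set.mem_setOf_eq] at hu hv
      rw [heq]
      have := hu j; have := hv j
      nlinarith
  exact this hx j

lemma Qstar_subset_polyQ (hA : IsBinaryMatrix A) : Qstar A ⊆ polyQ A := by
  apply convexHull_min
  · intro y hy
    exact ⟨hy.2, fun j => covSet_nonneg hy.1 j⟩
  · intro u hu v hv a b ha hb hab
    constructor
    · intro i
      have hsum : ∑ j, A i j * (a • u + b • v) j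
          = a * ∑ j, A i j * u j + b * ∑ j, A i j * v j := by
        rw [Finset.mul_sum, Finset.mul_sum, ← Finset.sum_add_distrib]
        apply Finset.sum_congr rfl; intro j _; simp; ring
      rw [hsum]
      have h1 := hu.1 i; have h2 := hv.1 i
      nlinarith
    · intro j
      have : (a • u + b • v) j = a * u j + b * v j := by simp
      rw [this]
      have := hu.2 j; have := hv.2 j
      nlinarith

lemma polyQ_convex : Convex ℝ (polyQ A) := by
  intro u hu v hv a b ha hb hab
  constructor
  · intro i
    have hsum : ∑ j, A i j * (a • u + b • v) j
        = a * ∑ j, A i j * u j + b * ∑ j, A i j * v j := by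
      rw [Finset.mul_sum, Finset.mul_sum, ← Finset.sum_add_distrib]
      apply Finset.sum_congr rfl; intro j _; simp; ring
    rw [hsum]
    have h1 := hu.1 i; have h2 := hv.1 i
    nlinarith
  · intro j
    have : (a • u + b • v) j = a * u j + b * v j := by simp
    rw [this]
    have := hu.2 j; have := hv.2 j
    nlinarith

lemma mono_row (hA : IsBinaryMatrix A) {x y : Fin n → ℝ} (hxy : ∀ j, x j ≤ y j) (t : Fin m) :
    ∑ j, A t j * x j ≤ ∑ j, A t j * y j := by
  apply Finset.sum_le_sum; intro j _
  exact mul_le_mul_of_nonneg_left (hxy j) (entry_nonneg hA t j)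

end AuxStmt19
section AuxStmt19B

open Finset

variable {m n : ℕ} {A : Matrix (Fin m) (Fin n) ℝ} {B₁ : Matrix (Fin n) (Fin n) ℝ} {s : ℕ}

/-- Covering property. -/
def CoverP {m n : ℕ} (A : Matrix (Fin m) (Fin n) ℝ) (x : Fin n → ℝ) : Prop :=
  ∀ i, 1 ≤ ∑ j, A i j * x j

/-- Minimal binary cover. -/
def IsMinCov {m n : ℕ} (A : Matrix (Fin m) (Fin n) ℝ) (w : Fin n → ℝ) : Prop :=
  IsBinaryVec w ∧ CoverP A w ∧ ∀ j, w j = 1 → ¬ CoverP A (Function.update w j 0)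

lemma binary_natCoords {x : Fin n → ℝ} (hx : IsBinaryVec x) (j : Fin n) : ∃ k : ℕ, x j = k := by
  rcases hx j with h | h
  · exact ⟨0, by rw [h]; norm_num⟩
  · exact ⟨1, by rw [h]; norm_num⟩

lemma minCov_mem_covSet {w : Fin n → ℝ} (hw : IsMinCov A w) : w ∈ covSet A :=
  ⟨binary_natCoords hw.1, hw.2.1⟩

lemma trunc_facts (hA : IsBinaryMatrix A) {x : Fin n → ℝ} (hx : x ∈ covSet A) :
    IsBinaryVec (fun j => min (x j) 1) ∧ CoverP A (fun j => min (x j) 1) ∧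
      ∀ j, min (x j) 1 ≤ x j := by
  obtain ⟨hnat, hcov⟩ := hx
  have hbin : IsBinaryVec (fun j => min (x j) 1) := by
    intro j
    rcases covSet_coord_cases hnat j with h | h
    · left; simp [h]
    · right; simp [min_eq_right h]
  refine ⟨hbin, ?_, fun j => min_le_left _ _⟩
  intro i
  have key : ∃ j, A i j ≠ 0 ∧ 1 ≤ x j := by
    by_contra hcon
    push_neg at hcon
    have h0 : ∑ j, A i j * x j = 0 := by
      apply Finset.sum_eq_zero; intro j _
      by_cases hj : A i j = 0
      · rw [hj, zero_mul]
      · have := hcon j hj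
        rcases covSet_coord_cases hnat j with h | h
        · rw [h, mul_zero]
        · linarith
    have := hcov i; rw [h0] at this; linarith
  obtain ⟨j₀, hj₀, hxj₀⟩ := key
  have hterm : A i j₀ * min (x j₀) 1 = 1 := by
    rcases hA i j₀ with h | h
    · exact absurd h hj₀
    · rw [h, one_mul, min_eq_right hxj₀]
  calc (1:ℝ) = A i j₀ * min (x j₀) 1 := hterm.symm
    _ ≤ ∑ j, A i j * min (x j) 1 := by
        apply Finset.single_le_sum (f := fun j => A i j * min (x j) 1)
        · intro j _
          apply mul_nonneg (entry_nonneg hA i j)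
          have := covSet_nonneg hnat j
          positivity
        · exact Finset.mem_univ j₀

lemma exists_minCov_aux (hA : IsBinaryMatrix A) :
    ∀ N : ℕ, ∀ x : Fin n → ℝ, (univ.filter fun j => x j ≠ 0).card ≤ N →
      IsBinaryVec x → CoverP A x → ∃ w, IsMinCov A w ∧ ∀ j, w j ≤ x j := by
  intro N
  induction N with
  | zero =>
      intro x hcard hbin hcov
      refine ⟨x, ⟨hbin, hcov, ?_⟩, fun j => le_refl _⟩
      intro j hj
      exfalso
      have : j ∈ univ.filter fun j => x j ≠ 0 := by simp [hj]
      have := Finset.card_pos.mpr ⟨j, this⟩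
      omega
  | succ N ih =>
      intro x hcard hbin hcov
      by_cases hmin : ∀ j, x j = 1 → ¬ CoverP A (Function.update x j 0)
      · exact ⟨x, ⟨hbin, hcov, hmin⟩, fun j => le_refl _⟩
      · push_neg at hmin
        obtain ⟨j₀, hj₀, hcov'⟩ := hmin
        set x' := Function.update x j₀ 0 with hx'
        have hbin' : IsBinaryVec x' := by
          intro j
          by_cases hj : j = j₀
          · subst hj; left; simp [hx']
          · rw [hx', Function.update_of_ne hj]; exact hbin j
        have hsub : (univ.filter fun j => x' j ≠ 0) ⊆ (univ.filter fun j => x j ≠ 0).erase j₀ := by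
          intro j hj
          simp only [Finset.mem_filter, Finset.mem_univ, true_and] at hj
          by_cases h : j = j₀
          · exfalso; apply hj; rw [h, hx']; simp
          · rw [Finset.mem_erase]
            refine ⟨h, ?_⟩
            simp only [Finset.mem_filter, Finset.mem_univ, true_and]
            rw [hx', Function.update_of_ne h] at hj; exact hj
        have hmem : j₀ ∈ univ.filter fun j => x j ≠ 0 := by simp [hj₀]
        have hcard' : (univ.filter fun j => x' j ≠ 0).card ≤ N := by
          have h1 := Finset.card_le_card hsub
          rw [Finset.card_erase_of_mem hmem] at h1
          omega
        obtain ⟨w, hw, hle⟩ := ih x' hcard' hbin' hcov'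
        refine ⟨w, hw, fun j => ?_⟩
        refine le_trans (hle j) ?_
        by_cases h : j = j₀
        · subst h; rw [hx']; simp; rw [hj₀]; norm_num
        · rw [hx', Function.update_of_ne h]

lemma exists_minCov (hA : IsBinaryMatrix A) {x : Fin n → ℝ}
    (hbin : IsBinaryVec x) (hcov : CoverP A x) :
    ∃ w, IsMinCov A w ∧ ∀ j, w j ≤ x j :=
  exists_minCov_aux hA _ x le_rfl hbin hcov

lemma dom_minCov (hA : IsBinaryMatrix A) {w : Fin n → ℝ} (hw : IsMinCov A w)
    {x : Fin n → ℝ} (hx : x ∈ Qstar A) (hx0 : ∀ j, w j = 0 → x j = 0) :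
    ∀ j, w j ≤ x j := by
  rw [Qstar_eq, _root_.convexHull_eq] at hx
  obtain ⟨ι, t, δ, p, hδ0, hδ1, hp, hcm⟩ := hx
  have hcm' : ∑ i ∈ t, δ i • p i = x := by
    rw [← hcm, Finset.centerMass, hδ1]; simp
  have hxj : ∀ j, x j = ∑ i ∈ t, δ i * p i j := by
    intro j; rw [← hcm']; simp [Finset.sum_apply]
  have hpnn : ∀ i ∈ t, ∀ j, 0 ≤ p i j := fun i hi j => covSet_nonneg (hp i hi).1 j
  have hzero : ∀ j, w j = 0 → ∀ i ∈ t, δ i ≠ 0 → p i j = 0 := by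
    intro j hj i hi hδi
    have h0 : ∑ i ∈ t, δ i * p i j = 0 := by rw [← hxj j]; exact hx0 j hj
    have := (Finset.sum_eq_zero_iff_of_nonneg
      (fun i hi => mul_nonneg (hδ0 i hi) (hpnn i hi j))).1 h0 i hi
    rcases mul_eq_zero.1 this with h | h
    · exact absurd h hδi
    · exact h
  have hone : ∀ i ∈ t, δ i ≠ 0 → ∀ j, w j = 1 → 1 ≤ p i j := by
    intro i hi hδi j hj
    by_contra hlt
    push_neg at hlt
    have hk0 : p i j = 0 := by
      rcases covSet_coord_cases (hp i hi).1 j with h | h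
      · exact h
      · linarith
    obtain ⟨hτbin, hτcov, hτle⟩ := trunc_facts hA (hp i hi)
    have hτle' : ∀ l, min (p i l) 1 ≤ Function.update w j 0 l := by
      intro l
      by_cases hl : l = j
      · subst hl; simp [hk0]
      · rw [Function.update_of_ne hl]
        rcases hw.1 l with h | h
        · rw [h]
          have := hzero l h i hi hδi
          simp [this]
        · rw [h]; exact min_le_right _ _
    have hcontra : CoverP A (Function.update w j 0) := by
      intro i'
      calc (1:ℝ) ≤ ∑ l, A i' l * min (p i l) 1 := hτcov i'
        _ ≤ ∑ l, A i' l * Function.update w j 0 l := mono_row hA hτle' i'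
    exact hw.2.2 j hj hcontra
  intro j
  rcases hw.1 j with h | h
  · rw [h, hxj j]
    apply Finset.sum_nonneg
    intro i hi; exact mul_nonneg (hδ0 i hi) (hpnn i hi j)
  · rw [h, hxj j]
    calc (1:ℝ) = ∑ i ∈ t, δ i := hδ1.symm
      _ ≤ ∑ i ∈ t, δ i * p i j := by
          apply Finset.sum_le_sum
          intro i hi
          by_cases hδi : δ i = 0
          · rw [hδi]; norm_num
          · have h1 := hone i hi hδi j h
            nlinarith [hδ0 i hi]

lemma minCov_extreme (hA : IsBinaryMatrix A) {w : Fin n → ℝ} (hw : IsMinCov A w) :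
    w ∈ (Qstar A).extremePoints ℝ := by
  refine ⟨subset_convexHull ℝ _ (minCov_mem_covSet hw), ?_⟩
  intro x hx y hy hseg
  obtain ⟨a, b, ha, hb, hab, habw⟩ := hseg
  have hxnn : ∀ j, 0 ≤ x j := Qstar_nonneg hx
  have hynn : ∀ j, 0 ≤ y j := Qstar_nonneg hy
  have hcoord : ∀ j, a * x j + b * y j = w j := by
    intro j; have := congrFun habw j; simpa using this
  have hx0 : ∀ j, w j = 0 → x j = 0 := by
    intro j hj
    have := hcoord j; rw [hj] at this
    nlinarith [hxnn j, hynn j]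
  have hy0 : ∀ j, w j = 0 → y j = 0 := by
    intro j hj
    have := hcoord j; rw [hj] at this
    nlinarith [hxnn j, hynn j]
  have hdx := dom_minCov hA hw hx hx0
  have hdy := dom_minCov hA hw hy hy0
  have key : ∀ j, x j = w j ∧ y j = w j := by
    intro j
    have h1 := hcoord j; have h2 := hdx j; have h3 := hdy j
    have e : a * (x j - w j) + b * (y j - w j) = 0 := by
      linear_combination h1 + (- w j) * hab
    have p1 : 0 ≤ a * (x j - w j) := mul_nonneg ha.le (sub_nonneg.mpr h2)
    have p2 : 0 ≤ b * (y j - w j) := mul_nonneg hb.le (sub_nonneg.mpr h3)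
    have e1 : a * (x j - w j) = 0 := by linarith
    have e2 : b * (y j - w j) = 0 := by linarith
    constructor
    · rcases mul_eq_zero.1 e1 with h | h
      · exact absurd h (ne_of_gt ha)
      · linarith
    · rcases mul_eq_zero.1 e2 with h | h
      · exact absurd h (ne_of_gt hb)
      · linarith
  exact funext fun j => (key j).1

end AuxStmt19B
section AuxStmt19C

open Finset

variable {m n : ℕ} {A : Matrix (Fin m) (Fin n) ℝ} {B₁ : Matrix (Fin n) (Fin n) ℝ} {s : ℕ}

lemma row_sum_eq_s (hbcore : IsBlockerCore A B₁ s) (i : Fin n) :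
    ∑ j, B₁ i j = (s : ℝ) := by
  have hbin : IsBinaryVec (B₁ i) := (hbcore.2.2.1 i).1
  have := binary_sum_eq_card hbin
  rw [this]
  have hcard : (rowSupp B₁ i).ncard = s := hbcore.2.2.2.2.1 i
  rw [rowSupp_ncard_eq] at hcard
  rw [hcard]

lemma minCov_sum_ge (hA : IsBinaryMatrix A) (hbcore : IsBlockerCore A B₁ s)
    {w : Fin n → ℝ} (hw : IsMinCov A w) : (s : ℝ) ≤ ∑ j, w j := by
  have hext := minCov_extreme hA hw
  by_cases hrow : ∃ i, w = B₁ i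
  · obtain ⟨i, rfl⟩ := hrow
    rw [row_sum_eq_s hbcore i]
  · push_neg at hrow
    have := hbcore.2.2.2.2.2.2 w hw.1 hext hrow
    rw [binary_sum_eq_supp_ncard hw.1]
    exact_mod_cast this.le

lemma covSet_sum_ge (hA : IsBinaryMatrix A) (hbcore : IsBlockerCore A B₁ s)
    {x : Fin n → ℝ} (hx : x ∈ covSet A) : (s : ℝ) ≤ ∑ j, x j := by
  obtain ⟨hτbin, hτcov, hτle⟩ := trunc_facts hA hx
  obtain ⟨w, hw, hwle⟩ := exists_minCov hA hτbin hτcov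
  calc (s : ℝ) ≤ ∑ j, w j := minCov_sum_ge hA hbcore hw
    _ ≤ ∑ j, min (x j) 1 := Finset.sum_le_sum fun j _ => hwle j
    _ ≤ ∑ j, x j := Finset.sum_le_sum fun j _ => hτle j

lemma covSet_sum_eq_row (hA : IsBinaryMatrix A) (hbcore : IsBlockerCore A B₁ s)
    {x : Fin n → ℝ} (hx : x ∈ covSet A) (hsum : ∑ j, x j = (s : ℝ)) :
    ∃ a, x = B₁ a := by
  obtain ⟨hτbin, hτcov, hτle⟩ := trunc_facts hA hx
  obtain ⟨w, hw, hwle⟩ := exists_minCov hA hτbin hτcov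
  have hge := minCov_sum_ge hA hbcore hw
  have hle2 : ∀ j, w j ≤ x j := fun j => le_trans (hwle j) (hτle j)
  have hsum2 : ∑ j, w j = ∑ j, x j := by
    have h1 : ∑ j, w j ≤ ∑ j, x j := Finset.sum_le_sum fun j _ => hle2 j
    rw [hsum]; linarith [hge, h1, hsum ▸ h1]
  have hxw : x = w := by
    funext j
    by_contra hne
    have hlt : w j < x j := lt_of_le_of_ne (hle2 j) (fun h => hne h.symm)
    have : ∑ j, w j < ∑ j, x j :=
      Finset.sum_lt_sum (fun j _ => hle2 j) ⟨j, Finset.mem_univ j, hlt⟩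
    rw [hsum2] at this; exact lt_irrefl _ this
  subst hxw
  have hext := minCov_extreme hA hw
  by_cases hrow : ∃ i, x = B₁ i
  · exact hrow
  · push_neg at hrow
    have := hbcore.2.2.2.2.2.2 x hw.1 hext hrow
    exfalso
    rw [binary_sum_eq_supp_ncard hw.1] at hsum
    have : (s:ℝ) < ((supp x).ncard : ℝ) := by exact_mod_cast this
    rw [hsum] at this
    exact lt_irrefl _ this

lemma Qstar_sum_ge (hA : IsBinaryMatrix A) (hbcore : IsBlockerCore A B₁ s)
    {x : Fin n → ℝ} (hx : x ∈ Qstar A) : (s : ℝ) ≤ ∑ j, x j := by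
  have hsub : Qstar A ⊆ {y : Fin n → ℝ | (s:ℝ) ≤ ∑ j, y j} := by
    apply convexHull_min
    · intro y hy; exact covSet_sum_ge hA hbcore hy
    · intro u hu v hv a b ha hb hab
      rw [Set.mem_setOf_eq] at hu hv ⊢
      have : ∑ j, (a • u + b • v) j = a * ∑ j, u j + b * ∑ j, v j := by
        rw [Finset.mul_sum, Finset.mul_sum, ← Finset.sum_add_distrib]
        apply Finset.sum_congr rfl; intro j _; simp
      rw [this]; nlinarith
  exact hsub hx

lemma Qstar_sum_s_mem_hull (hA : IsBinaryMatrix A) (hbcore : IsBlockerCore A B₁ s)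
    {x : Fin n → ℝ} (hx : x ∈ Qstar A) (hs : ∑ j, x j = (s:ℝ)) :
    x ∈ convexHull ℝ (Set.range fun a => B₁ a) := by
  rw [Qstar_eq, _root_.convexHull_eq] at hx
  obtain ⟨ι, t, δ, p, hδ0, hδ1, hp, hcm⟩ := hx
  have hcm' : ∑ i ∈ t, δ i • p i = x := by
    rw [← hcm, Finset.centerMass, hδ1]; simp
  have htot : ∑ i ∈ t, δ i * (∑ j, p i j) = (s:ℝ) := by
    rw [← hs, ← hcm']
    have h1 : ∀ j, (∑ i ∈ t, δ i • p i) j = ∑ i ∈ t, δ i * p i j := by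
      intro j; simp [Finset.sum_apply]
    calc ∑ i ∈ t, δ i * (∑ j, p i j) = ∑ i ∈ t, ∑ j, δ i * p i j := by
          apply Finset.sum_congr rfl; intro i _; rw [Finset.mul_sum]
      _ = ∑ j, ∑ i ∈ t, δ i * p i j := Finset.sum_comm
      _ = ∑ j, (∑ i ∈ t, δ i • p i) j := by
          apply Finset.sum_congr rfl; intro j _; rw [h1 j]
  have hactive : ∀ i ∈ t, δ i ≠ 0 → ∑ j, p i j = (s:ℝ) := by
    have hterm : ∀ i ∈ t, 0 ≤ δ i * ((∑ j, p i j) - (s:ℝ)) := by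
      intro i hi
      exact mul_nonneg (hδ0 i hi) (sub_nonneg.mpr (covSet_sum_ge hA hbcore (hp i hi)))
    have hzero : ∑ i ∈ t, δ i * ((∑ j, p i j) - (s:ℝ)) = 0 := by
      have : ∑ i ∈ t, δ i * ((∑ j, p i j) - (s:ℝ))
          = (∑ i ∈ t, δ i * (∑ j, p i j)) - (∑ i ∈ t, δ i) * (s:ℝ) := by
        rw [Finset.sum_mul, ← Finset.sum_sub_distrib]
        apply Finset.sum_congr rfl; intro i _; ring
      rw [this, htot, hδ1, one_mul, sub_self]
    intro i hi hδi
    have := (Finset.sum_eq_zero_iff_of_nonneg hterm).1 hzero i hi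
    rcases mul_eq_zero.1 this with h | h
    · exact absurd h hδi
    · linarith [sub_eq_zero.1 h]
  rw [← hcm, ← Finset.centerMass_filter_ne_zero]
  apply Finset.centerMass_mem_convexHull
  · intro i hi
    exact hδ0 i (Finset.mem_of_mem_filter i hi)
  · rw [Finset.sum_filter_ne_zero, hδ1]; norm_num
  · intro i hi
    rw [Finset.mem_filter] at hi
    obtain ⟨a, ha⟩ := covSet_sum_eq_row hA hbcore (hp i hi.1) (hactive i hi.1 hi.2)
    exact ⟨a, ha.symm⟩

end AuxStmt19C
section AuxStmt19D

open Finset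

variable {m n : ℕ} {A : Matrix (Fin m) (Fin n) ℝ} {B₁ : Matrix (Fin n) (Fin n) ℝ} {s : ℕ}

lemma rows_linIndep (hdet : B₁.det ≠ 0) (cf : Fin n → ℝ)
    (hcf : ∑ a, cf a • B₁ a = 0) : ∀ a, cf a = 0 := by
  have hvm : Matrix.vecMul cf B₁ = 0 := by
    funext j
    have := congrFun hcf j
    simpa [Matrix.vecMul, dotProduct, Finset.sum_apply] using this
  have hdet' : IsUnit B₁.det := isUnit_iff_ne_zero.mpr hdet
  have h := congrArg (fun q => Matrix.vecMul q B₁⁻¹) hvm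
  simp only [Matrix.vecMul_vecMul] at h
  rw [Matrix.mul_nonsing_inv _ hdet'] at h
  simp only [Matrix.vecMul_one] at h
  intro a
  have := congrFun h a
  simpa using this

lemma hull_rows_edge (hdet : B₁.det ≠ 0)
    (hinj : Function.Injective (fun i : Fin n => B₁ i)) {v v' x y z : Fin n → ℝ}
    (hv : ∃ a, v = B₁ a) (hv' : ∃ a, v' = B₁ a) (hne : v ≠ v')
    (hx : x ∈ convexHull ℝ (Set.range fun a => B₁ a))
    (hy : y ∈ convexHull ℝ (Set.range fun a => B₁ a))
    (hzseg : z ∈ segment ℝ v v') (hzopen : z ∈ openSegment ℝ x y) :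
    x ∈ segment ℝ v v' ∧ y ∈ segment ℝ v v' := by
  classical
  set sfin : Finset (Fin n → ℝ) := Finset.image (fun a => B₁ a) Finset.univ with hsfin
  have hrange : (Set.range fun a => B₁ a) = ↑sfin := by
    simp [hsfin]
  rw [hrange, Finset.convexHull_eq] at hx hy
  obtain ⟨w1, hw1nn, hw1s, hw1⟩ := hx
  obtain ⟨w2, hw2nn, hw2s, hw2⟩ := hy
  obtain ⟨a, b, ha, hb, hab, hzv⟩ := hzseg
  obtain ⟨c, d, hc, hd, hcd, hzxy⟩ := hzopen
  have hvmem : v ∈ sfin := by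
    obtain ⟨a₀, rfl⟩ := hv; simp [hsfin]; exact ⟨a₀, rfl⟩
  have hv'mem : v' ∈ sfin := by
    obtain ⟨b₀, rfl⟩ := hv'; simp [hsfin]; exact ⟨b₀, rfl⟩
  have hx' : ∑ u ∈ sfin, w1 u • u = x := by
    rw [← hw1, Finset.centerMass, hw1s]; simp
  have hy' : ∑ u ∈ sfin, w2 u • u = y := by
    rw [← hw2, Finset.centerMass, hw2s]; simp
  have hlin : ∀ cf : (Fin n → ℝ) → ℝ, (∑ u ∈ sfin, cf u • u = 0) → ∀ u ∈ sfin, cf u = 0 := by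
    intro cf hcf u hu
    have himg : ∑ u ∈ sfin, cf u • u = ∑ a : Fin n, cf (B₁ a) • B₁ a := by
      rw [hsfin]
      exact Finset.sum_image (fun a _ b _ hab' => hinj hab')
    have hsum : ∑ a : Fin n, cf (B₁ a) • B₁ a = 0 := by
      rw [← himg]; exact hcf
    have := rows_linIndep hdet (fun a => cf (B₁ a)) hsum
    obtain ⟨a', _, rfl⟩ := Finset.mem_image.1 hu
    exact this a'
  set wz : (Fin n → ℝ) → ℝ := fun u => (if u = v then a else 0) + (if u = v' then b else 0)
    with hwz
  have hzsum : ∑ u ∈ sfin, wz u • u = z := by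
    rw [← hzv]
    have hterm : ∀ u ∈ sfin, wz u • u
        = (if u = v then a • v else 0) + (if u = v' then b • v' else 0) := by
      intro u _
      rw [hwz]; simp only
      split_ifs with h1 h2
      · exact absurd (h1.symm.trans h2) hne
      · subst h1; rw [add_zero, add_zero]
      · subst ‹u = v'›; rw [zero_add, zero_add]
      · rw [add_zero, zero_smul, add_zero]
    rw [Finset.sum_congr rfl hterm, Finset.sum_add_distrib,
      Finset.sum_ite_eq' sfin v (fun _ => a • v), Finset.sum_ite_eq' sfin v' (fun _ => b • v'),
      if_pos hvmem, if_pos hv'mem]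
  have hzsum2 : ∑ u ∈ sfin, (c * w1 u + d * w2 u) • u = z := by
    have h2 : c • x + d • y = ∑ u ∈ sfin, (c * w1 u + d * w2 u) • u := by
      rw [← hx', ← hy', Finset.smul_sum, Finset.smul_sum, ← Finset.sum_add_distrib]
      apply Finset.sum_congr rfl; intro u _
      rw [smul_smul, smul_smul, ← add_smul]
    rw [← h2, hzxy]
  have hdiff : ∑ u ∈ sfin, ((c * w1 u + d * w2 u) - wz u) • u = 0 := by
    have : ∀ u ∈ sfin, ((c * w1 u + d * w2 u) - wz u) • u
        = (c * w1 u + d * w2 u) • u - wz u • u := fun u _ => sub_smul _ _ _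
    rw [Finset.sum_congr rfl this, Finset.sum_sub_distrib, hzsum2, hzsum, sub_self]
  have heq : ∀ u ∈ sfin, c * w1 u + d * w2 u = wz u := by
    intro u hu
    have := hlin _ hdiff u hu
    linarith [this]
  have hvanish : ∀ u ∈ sfin, u ≠ v → u ≠ v' → w1 u = 0 ∧ w2 u = 0 := by
    intro u hu h1 h2
    have h3 := heq u hu
    rw [hwz] at h3
    simp only [if_neg h1, if_neg h2, add_zero] at h3
    have e1 : c * w1 u = 0 ∧ d * w2 u = 0 := by
      constructor <;>
        nlinarith [mul_nonneg hc.le (hw1nn u hu), mul_nonneg hd.le (hw2nn u hu)]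
    constructor
    · rcases mul_eq_zero.1 e1.1 with h | h
      · exact absurd h (ne_of_gt hc)
      · exact h
    · rcases mul_eq_zero.1 e1.2 with h | h
      · exact absurd h (ne_of_gt hd)
      · exact h
  have hpairsub : ({v, v'} : Finset (Fin n → ℝ)) ⊆ sfin :=
    Finset.insert_subset hvmem (Finset.singleton_subset_iff.2 hv'mem)
  have hnotpair : ∀ u ∈ sfin, u ∉ ({v, v'} : Finset (Fin n → ℝ)) → u ≠ v ∧ u ≠ v' := by
    intro u _ hu
    simp only [Finset.mem_insert, Finset.mem_singleton] at hu
    push_neg at hu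
    exact hu
  constructor
  · refine ⟨w1 v, w1 v', hw1nn v hvmem, hw1nn v' hv'mem, ?_, ?_⟩
    · rw [← hw1s]
      rw [← Finset.sum_subset hpairsub (fun u hu hnu => ((hvanish u hu
        (hnotpair u hu hnu).1 (hnotpair u hu hnu).2).1))]
      exact (Finset.sum_pair (f := w1) hne).symm
    · rw [← hx']
      rw [← Finset.sum_subset hpairsub (fun u hu hnu => by
        rw [(hvanish u hu (hnotpair u hu hnu).1 (hnotpair u hu hnu).2).1, zero_smul])]
      exact (Finset.sum_pair (f := fun u => w1 u • u) hne).symm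
  · refine ⟨w2 v, w2 v', hw2nn v hvmem, hw2nn v' hv'mem, ?_, ?_⟩
    · rw [← hw2s]
      rw [← Finset.sum_subset hpairsub (fun u hu hnu => ((hvanish u hu
        (hnotpair u hu hnu).1 (hnotpair u hu hnu).2).2))]
      exact (Finset.sum_pair (f := w2) hne).symm
    · rw [← hy']
      rw [← Finset.sum_subset hpairsub (fun u hu hnu => by
        rw [(hvanish u hu (hnotpair u hu hnu).1 (hnotpair u hu hnu).2).2, zero_smul])]
      exact (Finset.sum_pair (f := fun u => w2 u • u) hne).symm

lemma extremePoints_of_subset {S T : Set (Fin n → ℝ)} {x : Fin n → ℝ}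
    (hTS : T ⊆ S) (hxT : x ∈ T) (hx : x ∈ S.extremePoints ℝ) : x ∈ T.extremePoints ℝ :=
  ⟨hxT, fun x₁ h₁ x₂ h₂ hseg => hx.2 (hTS h₁) (hTS h₂) hseg⟩

end AuxStmt19D
section AuxStmt19E

open Finset

variable {m n : ℕ} {A : Matrix (Fin m) (Fin n) ℝ} {B₁ : Matrix (Fin n) (Fin n) ℝ} {s : ℕ}

lemma sum_continuous : Continuous (fun x : Fin n → ℝ => ∑ j, x j) :=
  continuous_finset_sum _ fun j _ => continuous_apply j

lemma sum_combo (a b : ℝ) (u w : Fin n → ℝ) :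
    ∑ j, (a • u + b • w) j = a * ∑ j, u j + b * ∑ j, w j := by
  rw [Finset.mul_sum, Finset.mul_sum, ← Finset.sum_add_distrib]
  apply Finset.sum_congr rfl; intro j _; simp

lemma polyQ_closed : IsClosed (polyQ A) := by
  have : polyQ A = (⋂ i, {x : Fin n → ℝ | 1 ≤ ∑ j, A i j * x j}) ∩
      (⋂ j, {x : Fin n → ℝ | 0 ≤ x j}) := by
    ext x; simp [polyQ, Set.mem_iInter]
  rw [this]
  apply IsClosed.inter
  · apply isClosed_iInter; intro i
    apply isClosed_le continuous_const
    exact continuous_finset_sum _ fun j _ => (continuous_const.mul (continuous_apply j))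
  · apply isClosed_iInter; intro j
    exact isClosed_le continuous_const (continuous_apply j)

lemma convex_hyp (i₀ : Fin n) : Convex ℝ {x : Fin n → ℝ | x i₀ = 0} := by
  intro u hu w hw a b ha hb hab
  simp only [Set.mem_setOf_eq] at hu hw ⊢
  simp [hu, hw]

lemma convex_sum_le (c : ℝ) : Convex ℝ {x : Fin n → ℝ | ∑ j, x j ≤ c} := by
  intro u hu w hw a b ha hb hab
  simp only [Set.mem_setOf_eq] at hu hw ⊢
  rw [sum_combo]
  have h1 := mul_le_mul_of_nonneg_left hu ha
  have h2 := mul_le_mul_of_nonneg_left hw hb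
  have hc' : a * c + b * c = c := by linear_combination c * hab
  linarith

lemma convex_sum_eq (c : ℝ) : Convex ℝ {x : Fin n → ℝ | ∑ j, x j = c} := by
  intro u hu w hw a b ha hb hab
  simp only [Set.mem_setOf_eq] at hu hw ⊢
  rw [sum_combo, hu, hw]
  linear_combination c * hab

lemma exists_extremePoint {H : Set (Fin n → ℝ)} (hcomp : IsCompact H) (hconv : Convex ℝ H)
    (hne : H.Nonempty) : (H.extremePoints ℝ).Nonempty := by
  by_contra hcon
  rw [Set.not_nonempty_iff_eq_empty] at hcon
  have hKM := closure_convexHull_extremePoints hcomp hconv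
  rw [hcon, convexHull_empty, closure_empty] at hKM
  obtain ⟨x, hx⟩ := hne
  rw [← hKM] at hx
  exact hx

lemma face_extreme_transfer {S : Set (Fin n → ℝ)} {μ : ℝ}
    (hval : ∀ x ∈ S, μ ≤ ∑ j, x j) {e : Fin n → ℝ}
    (he : e ∈ Set.extremePoints ℝ (S ∩ {x | ∑ j, x j = μ})) :
    e ∈ Set.extremePoints ℝ S := by
  obtain ⟨⟨heS, heμ⟩, hext⟩ := he
  refine ⟨heS, ?_⟩
  intro x hx y hy hseg
  have hxs := hval x hx
  have hys := hval y hy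
  obtain ⟨c, d, hc, hd, hcd, hz⟩ := hseg
  have hesum : c * ∑ j, x j + d * ∑ j, y j = μ := by
    rw [← sum_combo, hz]; exact heμ
  have p1 : 0 ≤ c * (∑ j, x j - μ) := mul_nonneg hc.le (sub_nonneg.mpr hxs)
  have p2 : 0 ≤ d * (∑ j, y j - μ) := mul_nonneg hd.le (sub_nonneg.mpr hys)
  have e0 : c * (∑ j, x j - μ) + d * (∑ j, y j - μ) = 0 := by
    linear_combination hesum + (- μ) * hcd
  have e1 : c * (∑ j, x j - μ) = 0 := by linarith
  have e2 : d * (∑ j, y j - μ) = 0 := by linarith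
  have hxsum : ∑ j, x j = μ := by
    rcases mul_eq_zero.1 e1 with h | h
    · exact absurd h (ne_of_gt hc)
    · linarith
  have hysum : ∑ j, y j = μ := by
    rcases mul_eq_zero.1 e2 with h | h
    · exact absurd h (ne_of_gt hd)
    · linarith
  exact hext ⟨hx, hxsum⟩ ⟨hy, hysum⟩ ⟨c, d, hc, hd, hcd, hz⟩

lemma slice_bounded_compact (i₀ : Fin n) (c : ℝ)
    {S : Set (Fin n → ℝ)} (hSsub : S ⊆ polyQ A ∩ {x | x i₀ = 0})
    (hSclosed : IsClosed S) (hSsum : ∀ x ∈ S, ∑ j, x j ≤ c) : IsCompact S := by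
  apply Metric.isCompact_of_isClosed_isBounded hSclosed
  rw [isBounded_iff_forall_norm_le]
  refine ⟨max c 0, fun x hx => ?_⟩
  rw [pi_norm_le_iff_of_nonneg (le_max_right _ _)]
  intro i
  have hnn : ∀ j, 0 ≤ x j := (hSsub hx).1.2
  rw [Real.norm_eq_abs, abs_of_nonneg (hnn i)]
  calc x i ≤ ∑ j, x j := Finset.single_le_sum (fun j _ => hnn j) (Finset.mem_univ i)
    _ ≤ c := hSsum x hx
    _ ≤ max c 0 := le_max_left _ _

lemma int_coords_to_nat {x : Fin n → ℝ} (hnn : ∀ j, 0 ≤ x j)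
    (hint : ∀ j, ∃ z : ℤ, x j = z) (j : Fin n) : ∃ k : ℕ, x j = k := by
  obtain ⟨z, hz⟩ := hint j
  have hz0 : 0 ≤ z := by
    have := hnn j; rw [hz] at this; exact_mod_cast this
  refine ⟨z.toNat, ?_⟩
  rw [hz]
  exact_mod_cast (Int.toNat_of_nonneg hz0).symm

lemma slice_sum_ge (hA : IsBinaryMatrix A) (hbcore : IsBlockerCore A B₁ s)
    (hmni : MinimallyNonideal A) (i₀ : Fin n) :
    ∀ u ∈ polyQ A ∩ {x | x i₀ = 0}, (s:ℝ) ≤ ∑ j, u j := by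
  intro u₀ hu₀
  set S : Set (Fin n → ℝ) := polyQ A ∩ {x | x i₀ = 0} with hS
  have hSclosed : IsClosed S := polyQ_closed.inter (isClosed_eq (continuous_apply i₀) continuous_const)
  have hSconv : Convex ℝ S := polyQ_convex.inter (convex_hyp i₀)
  set K : Set (Fin n → ℝ) := S ∩ {x | ∑ j, x j ≤ ∑ j, u₀ j} with hK
  have hKclosed : IsClosed K := hSclosed.inter (isClosed_le sum_continuous continuous_const)
  have hKcomp : IsCompact K :=
    slice_bounded_compact i₀ (∑ j, u₀ j) Set.inter_subset_left hKclosed (fun x hx => hx.2)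
  have hu₀K : u₀ ∈ K := ⟨hu₀, show ∑ j, u₀ j ≤ ∑ j, u₀ j from le_rfl⟩
  obtain ⟨w₀, hw₀K, hw₀min⟩ := hKcomp.exists_isMinOn ⟨u₀, hu₀K⟩ sum_continuous.continuousOn
  set μ : ℝ := ∑ j, w₀ j with hμ
  have hglobal : ∀ x ∈ S, μ ≤ ∑ j, x j := by
    intro x hx
    by_cases hc : ∑ j, x j ≤ ∑ j, u₀ j
    · exact isMinOn_iff.1 hw₀min x ⟨hx, hc⟩
    · push_neg at hc
      have h1 : μ ≤ ∑ j, u₀ j := hw₀K.2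
      linarith
  have hμle : μ ≤ ∑ j, u₀ j := hw₀K.2
  -- the face S ∩ {∑ = μ}
  set H : Set (Fin n → ℝ) := S ∩ {x | ∑ j, x j = μ} with hH
  have hHsubK : H ⊆ K := fun x hx =>
    ⟨hx.1, show ∑ j, x j ≤ ∑ j, u₀ j by
      have h2 : ∑ j, x j = μ := hx.2
      rw [h2]; exact hμle⟩
  have hHclosed : IsClosed H := hSclosed.inter (isClosed_eq sum_continuous continuous_const)
  have hHcomp : IsCompact H := hKcomp.of_isClosed_subset hHclosed hHsubK
  have hHconv : Convex ℝ H := hSconv.inter (convex_sum_eq μ)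
  have hHne : H.Nonempty := ⟨w₀, hw₀K.1, rfl⟩
  obtain ⟨e, he⟩ := exists_extremePoint hHcomp hHconv hHne
  have heS : e ∈ Set.extremePoints ℝ S := face_extreme_transfer hglobal he
  have heint : ∀ j, ∃ z : ℤ, e j = z := (hmni.2 i₀).1 e heS
  have hePQ : e ∈ polyQ A := heS.1.1
  have hecov : e ∈ covSet A := ⟨int_coords_to_nat hePQ.2 heint, hePQ.1⟩
  have hge := covSet_sum_ge hA hbcore hecov
  have heμ : ∑ j, e j = μ := he.1.2
  calc (s:ℝ) ≤ ∑ j, e j := hge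
    _ = μ := heμ
    _ ≤ ∑ j, u₀ j := hμle

lemma slice_face_subset (hA : IsBinaryMatrix A) (hbcore : IsBlockerCore A B₁ s)
    (hmni : MinimallyNonideal A) (i₀ : Fin n) :
    ∀ u ∈ polyQ A ∩ {x | x i₀ = 0}, ∑ j, u j = (s:ℝ) →
      u ∈ convexHull ℝ (Set.range fun a => B₁ a) := by
  intro u hu husum
  set S : Set (Fin n → ℝ) := polyQ A ∩ {x | x i₀ = 0} with hS
  have hSclosed : IsClosed S := polyQ_closed.inter (isClosed_eq (continuous_apply i₀) continuous_const)
  have hSconv : Convex ℝ S := polyQ_convex.inter (convex_hyp i₀)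
  set G : Set (Fin n → ℝ) := S ∩ {x | ∑ j, x j = (s:ℝ)} with hG
  have hGclosed : IsClosed G := hSclosed.inter (isClosed_eq sum_continuous continuous_const)
  have hGcomp : IsCompact G :=
    slice_bounded_compact i₀ (s:ℝ) Set.inter_subset_left hGclosed (fun x hx => le_of_eq hx.2)
  have hGconv : Convex ℝ G := hSconv.inter (convex_sum_eq _)
  have hKM := closure_convexHull_extremePoints hGcomp hGconv
  have hval : ∀ x ∈ S, (s:ℝ) ≤ ∑ j, x j := slice_sum_ge hA hbcore hmni i₀
  have hextsub : Set.extremePoints ℝ G ⊆ Set.range fun a => B₁ a := by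
    intro e he
    have heS : e ∈ Set.extremePoints ℝ S := face_extreme_transfer hval he
    have heint : ∀ j, ∃ z : ℤ, e j = z := (hmni.2 i₀).1 e heS
    have hePQ : e ∈ polyQ A := heS.1.1
    have hecov : e ∈ covSet A := ⟨int_coords_to_nat hePQ.2 heint, hePQ.1⟩
    obtain ⟨a, ha⟩ := covSet_sum_eq_row hA hbcore hecov he.1.2
    exact ⟨a, ha.symm⟩
  have hfin : (Set.range fun a : Fin n => B₁ a).Finite := Set.finite_range _
  have hclosed : IsClosed (convexHull ℝ (Set.range fun a : Fin n => B₁ a)) :=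
    hfin.isClosed_convexHull ℝ
  have : G ⊆ convexHull ℝ (Set.range fun a : Fin n => B₁ a) := by
    rw [← hKM]
    calc closure (convexHull ℝ (Set.extremePoints ℝ G))
        ⊆ closure (convexHull ℝ (Set.range fun a : Fin n => B₁ a)) :=
          closure_mono (convexHull_mono hextsub)
      _ = convexHull ℝ (Set.range fun a : Fin n => B₁ a) := hclosed.closure_eq
  exact this ⟨hu, husum⟩

end AuxStmt19E
section AuxStmt19F

open Finset

variable {m n : ℕ} {A : Matrix (Fin m) (Fin n) ℝ} {B₁ : Matrix (Fin n) (Fin n) ℝ} {s : ℕ}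

lemma part1_adj (hA : IsBinaryMatrix A) (hbcore : IsBlockerCore A B₁ s)
    {v v' : Fin n → ℝ} (hne : v ≠ v') (hbv : IsBinaryVec v) (hbv' : IsBinaryVec v')
    (hv : IsVertex (polyQ A) v) (hv' : IsVertex (polyQ A) v')
    (hsv : ∑ j, v j = (s:ℝ)) (hsv' : ∑ j, v' j = (s:ℝ)) :
    AdjacentVerts (Qstar A) v v' := by
  have hvQ : v ∈ polyQ A := extremePoints_subset hv
  have hv'Q : v' ∈ polyQ A := extremePoints_subset hv'
  have hvcov : v ∈ covSet A := ⟨binary_natCoords hbv, hvQ.1⟩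
  have hv'cov : v' ∈ covSet A := ⟨binary_natCoords hbv', hv'Q.1⟩
  have hvQs : v ∈ Qstar A := subset_convexHull ℝ _ hvcov
  have hv'Qs : v' ∈ Qstar A := subset_convexHull ℝ _ hv'cov
  have hvrow : ∃ a, v = B₁ a := covSet_sum_eq_row hA hbcore hvcov hsv
  have hv'row : ∃ a, v' = B₁ a := covSet_sum_eq_row hA hbcore hv'cov hsv'
  have hvert : IsVertex (Qstar A) v :=
    extremePoints_of_subset (Qstar_subset_polyQ hA) hvQs hv
  have hvert' : IsVertex (Qstar A) v' :=
    extremePoints_of_subset (Qstar_subset_polyQ hA) hv'Qs hv'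
  refine ⟨hne, hvert, hvert', ?_, ?_⟩
  · exact (convex_convexHull ℝ _).segment_subset hvQs hv'Qs
  · intro x hx y hy z hzseg hzopen
    have hzsum : ∑ j, z j = (s:ℝ) := by
      obtain ⟨a, b, ha, hb, hab, hz⟩ := hzseg
      rw [← hz, sum_combo, hsv, hsv']
      linear_combination (s:ℝ) * hab
    have hxge := Qstar_sum_ge hA hbcore hx
    have hyge := Qstar_sum_ge hA hbcore hy
    have hzo := hzopen
    obtain ⟨c, d, hc, hd, hcd, hz⟩ := hzopen
    have hesum : c * ∑ j, x j + d * ∑ j, y j = (s:ℝ) := by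
      rw [← sum_combo, hz, hzsum]
    have p1 : 0 ≤ c * (∑ j, x j - (s:ℝ)) := mul_nonneg hc.le (sub_nonneg.mpr hxge)
    have p2 : 0 ≤ d * (∑ j, y j - (s:ℝ)) := mul_nonneg hd.le (sub_nonneg.mpr hyge)
    have e0 : c * (∑ j, x j - (s:ℝ)) + d * (∑ j, y j - (s:ℝ)) = 0 := by
      linear_combination hesum + (-(s:ℝ)) * hcd
    have hxs : ∑ j, x j = (s:ℝ) := by
      rcases mul_eq_zero.1 (show c * (∑ j, x j - (s:ℝ)) = 0 by linarith) with h | h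
      · exact absurd h (ne_of_gt hc)
      · linarith
    have hys : ∑ j, y j = (s:ℝ) := by
      rcases mul_eq_zero.1 (show d * (∑ j, y j - (s:ℝ)) = 0 by linarith) with h | h
      · exact absurd h (ne_of_gt hd)
      · linarith
    exact (hull_rows_edge hbcore.2.1 hbcore.2.2.2.1 hvrow hv'row hne
      (Qstar_sum_s_mem_hull hA hbcore hx hxs) (Qstar_sum_s_mem_hull hA hbcore hy hys)
      hzseg hzo).1

lemma part2_if (hA : IsBinaryMatrix A) (hmni : MinimallyNonideal A)
    (hbcore : IsBlockerCore A B₁ s)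
    {v v' : Fin n → ℝ} (hne : v ≠ v') (hbv : IsBinaryVec v) (hbv' : IsBinaryVec v')
    (hv : IsVertex (polyQ A) v) (hv' : IsVertex (polyQ A) v')
    (hsv : ∑ j, v j = (s:ℝ)) (hsv' : ∑ j, v' j = (s:ℝ))
    (hU : supp v ∪ supp v' ≠ (Set.univ : Set (Fin n))) :
    IsExtreme ℝ (polyQ A) (segment ℝ v v') := by
  have hvQ : v ∈ polyQ A := extremePoints_subset hv
  have hv'Q : v' ∈ polyQ A := extremePoints_subset hv'
  have hvcov : v ∈ covSet A := ⟨binary_natCoords hbv, hvQ.1⟩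
  have hv'cov : v' ∈ covSet A := ⟨binary_natCoords hbv', hv'Q.1⟩
  have hvrow : ∃ a, v = B₁ a := covSet_sum_eq_row hA hbcore hvcov hsv
  have hv'row : ∃ a, v' = B₁ a := covSet_sum_eq_row hA hbcore hv'cov hsv'
  obtain ⟨i₀, hi₀⟩ := Set.ne_univ_iff_exists_notMem _ |>.1 hU
  have hvi₀ : v i₀ = 0 := by
    by_contra h; exact hi₀ (Set.mem_union_left _ h)
  have hv'i₀ : v' i₀ = 0 := by
    by_contra h; exact hi₀ (Set.mem_union_right _ h)
  constructor
  · exact polyQ_convex.segment_subset hvQ hv'Q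
  · intro x hx y hy z hzseg hzopen
    have hzi₀ : z i₀ = 0 := by
      obtain ⟨a, b, ha, hb, hab, hz⟩ := hzseg
      have := congrFun hz i₀
      simp only [Pi.add_apply, Pi.smul_apply, smul_eq_mul] at this
      rw [hvi₀, hv'i₀] at this
      linarith [this]
    have hzo := hzopen
    obtain ⟨c, d, hc, hd, hcd, hz⟩ := hzopen
    have hcoord : c * x i₀ + d * y i₀ = 0 := by
      have := congrFun hz i₀
      simp only [Pi.add_apply, Pi.smul_apply, smul_eq_mul] at this
      rw [hzi₀] at this; exact this
    have hxi₀ : x i₀ = 0 := by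
      have h1 := hx.2 i₀; have h2 := hy.2 i₀
      have e1 : c * x i₀ = 0 := by nlinarith [mul_nonneg hc.le h1, mul_nonneg hd.le h2]
      rcases mul_eq_zero.1 e1 with h | h
      · exact absurd h (ne_of_gt hc)
      · exact h
    have hyi₀ : y i₀ = 0 := by
      have h1 := hx.2 i₀; have h2 := hy.2 i₀
      have e2 : d * y i₀ = 0 := by nlinarith [mul_nonneg hc.le h1, mul_nonneg hd.le h2]
      rcases mul_eq_zero.1 e2 with h | h
      · exact absurd h (ne_of_gt hd)
      · exact h
    have hxS : x ∈ polyQ A ∩ {u : Fin n → ℝ | u i₀ = 0} := ⟨hx, hxi₀⟩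
    have hyS : y ∈ polyQ A ∩ {u : Fin n → ℝ | u i₀ = 0} := ⟨hy, hyi₀⟩
    have hval := slice_sum_ge hA hbcore hmni i₀
    have hxge := hval x hxS
    have hyge := hval y hyS
    have hzsum : ∑ j, z j = (s:ℝ) := by
      obtain ⟨a, b, ha, hb, hab, hzv⟩ := hzseg
      rw [← hzv, sum_combo, hsv, hsv']
      linear_combination (s:ℝ) * hab
    have hesum : c * ∑ j, x j + d * ∑ j, y j = (s:ℝ) := by
      rw [← sum_combo, hz, hzsum]
    have p1 : 0 ≤ c * (∑ j, x j - (s:ℝ)) := mul_nonneg hc.le (sub_nonneg.mpr hxge)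
    have p2 : 0 ≤ d * (∑ j, y j - (s:ℝ)) := mul_nonneg hd.le (sub_nonneg.mpr hyge)
    have e0 : c * (∑ j, x j - (s:ℝ)) + d * (∑ j, y j - (s:ℝ)) = 0 := by
      linear_combination hesum + (-(s:ℝ)) * hcd
    have hxs : ∑ j, x j = (s:ℝ) := by
      rcases mul_eq_zero.1 (show c * (∑ j, x j - (s:ℝ)) = 0 by linarith) with h | h
      · exact absurd h (ne_of_gt hc)
      · linarith
    have hys : ∑ j, y j = (s:ℝ) := by
      rcases mul_eq_zero.1 (show d * (∑ j, y j - (s:ℝ)) = 0 by linarith) with h | h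
      · exact absurd h (ne_of_gt hd)
      · linarith
    exact (hull_rows_edge hbcore.2.1 hbcore.2.2.2.1 hvrow hv'row hne
      (slice_face_subset hA hbcore hmni i₀ x hxS hxs)
      (slice_face_subset hA hbcore hmni i₀ y hyS hys)
      hzseg hzo).1

end AuxStmt19F
section AuxStmt19G

open Finset

variable {m n : ℕ} {A : Matrix (Fin m) (Fin n) ℝ} {A₁ B₁ : Matrix (Fin n) (Fin n) ℝ} {r s : ℕ}

lemma core_row_binary (hA : IsBinaryMatrix A) (hcore : IsCore A A₁ r) (i : Fin n) :
    IsBinaryVec (A₁ i) := by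
  obtain ⟨_, _, ⟨f, _, hfrow, _⟩, _, _⟩ := hcore
  intro j
  have := congrFun (hfrow i) j
  rw [this]
  exact hA (f i) j

lemma rows_ge_two (hcore : IsCore A A₁ r) (t : Fin m) : 2 ≤ (rowSupp A t).ncard := by
  obtain ⟨hr2, _, ⟨f, _, hfrow, hfbig⟩, hrowcard, _⟩ := hcore
  by_cases ht : t ∈ Set.range f
  · obtain ⟨i, rfl⟩ := ht
    have heq : rowSupp A (f i) = rowSupp A₁ i := by
      ext j
      simp only [rowSupp, Set.mem_setOf_eq]
      rw [congrFun (hfrow i) j]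
    rw [heq, hrowcard i]
    exact hr2
  · have := hfbig t ht
    omega

lemma rows_ge_three (hcore : IsCore A A₁ r) (hr3 : 3 ≤ r) (t : Fin m) :
    3 ≤ (rowSupp A t).ncard := by
  obtain ⟨hr2, _, ⟨f, _, hfrow, hfbig⟩, hrowcard, _⟩ := hcore
  by_cases ht : t ∈ Set.range f
  · obtain ⟨i, rfl⟩ := ht
    have heq : rowSupp A (f i) = rowSupp A₁ i := by
      ext j
      simp only [rowSupp, Set.mem_setOf_eq]
      rw [congrFun (hfrow i) j]
    rw [heq, hrowcard i]
    exact hr3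
  · have := hfbig t ht
    omega

lemma perturb_split (hA : IsBinaryMatrix A) (t : Fin m) (z : Fin n → ℝ) (j₀ : Fin n) (ε : ℝ) :
    ∑ j, A t j * (z j - (if j = j₀ then ε else 0)) = ∑ j, A t j * z j - A t j₀ * ε := by
  have h1 : ∀ j ∈ Finset.univ, A t j * (z j - (if j = j₀ then ε else 0))
      = A t j * z j - (if j = j₀ then A t j₀ * ε else 0) := by
    intro j _
    split_ifs with h
    · subst h; ring
    · ring
  rw [Finset.sum_congr rfl h1, Finset.sum_sub_distrib, Finset.sum_ite_eq' Finset.univ j₀]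
  simp

lemma union_univ_not_adj (hA : IsBinaryMatrix A) (hcore : IsCore A A₁ r)
    (hbcore : IsBlockerCore A B₁ s)
    {v v' : Fin n → ℝ} (hne : v ≠ v') (hbv : IsBinaryVec v) (hbv' : IsBinaryVec v')
    (hvQ : v ∈ polyQ A) (hv'Q : v' ∈ polyQ A)
    (hsv : ∑ j, v j = (s:ℝ))
    (hU : supp v ∪ supp v' = (Set.univ : Set (Fin n))) :
    ¬ IsExtreme ℝ (polyQ A) (segment ℝ v v') := by
  intro hext
  have hv1 : ∀ j, 1 ≤ v j + v' j := by
    intro j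
    have hj : j ∈ supp v ∪ supp v' := by rw [hU]; trivial
    rcases hj with hj | hj
    · have h1 : v j = 1 := by
        rcases hbv j with h | h
        · exact absurd h hj
        · exact h
      have := hv'Q.2 j
      linarith
    · have h1 : v' j = 1 := by
        rcases hbv' j with h | h
        · exact absurd h hj
        · exact h
      have := hvQ.2 j
      linarith
  set z : Fin n → ℝ := fun j => (v j + v' j) / 2 with hzdef
  have hzseg : z ∈ segment ℝ v v' := by
    refine ⟨1/2, 1/2, by norm_num, by norm_num, by norm_num, ?_⟩
    funext j
    simp only [Pi.add_apply, Pi.smul_apply, smul_eq_mul, hzdef]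
    ring
  have hzge : ∀ j, (1:ℝ)/2 ≤ z j := by
    intro j
    rw [hzdef]
    have := hv1 j
    simp only
    linarith
  have hzQ : z ∈ polyQ A := polyQ_convex.segment_subset hvQ hv'Q hzseg
  by_cases hint : ∃ j₀, v j₀ = 1 ∧ v' j₀ = 1
  -- Case A : supports intersect
  · obtain ⟨j₀, hj₀v, hj₀v'⟩ := hint
    have hzj₀ : z j₀ = 1 := by rw [hzdef]; simp only; rw [hj₀v, hj₀v']; norm_num
    set x : Fin n → ℝ := fun j => z j + (if j = j₀ then (1:ℝ)/2 else 0) with hxdef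
    set y : Fin n → ℝ := fun j => z j - (if j = j₀ then (1:ℝ)/2 else 0) with hydef
    have hxQ : x ∈ polyQ A := by
      constructor
      · intro t
        calc (1:ℝ) ≤ ∑ j, A t j * z j := hzQ.1 t
          _ ≤ ∑ j, A t j * x j := by
              apply mono_row hA
              intro j
              rw [hxdef]
              simp only
              split_ifs <;> linarith
      · intro j
        rw [hxdef]; simp only
        have := hzge j
        split_ifs <;> linarith
    have hyQ : y ∈ polyQ A := by
      constructor
      · intro t
        have hsplit := perturb_split hA t z j₀ (1/2)
        rw [hydef]
        rw [hsplit]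
        rcases hA t j₀ with h0 | h1
        · rw [h0]
          have := hzQ.1 t
          linarith
        · -- row contains j₀, has another support element q
          have hmem : j₀ ∈ rowSupp A t := by
            simp only [rowSupp, Set.mem_setOf_eq]; rw [h1]; norm_num
          obtain ⟨q, hq, hqne⟩ := Set.exists_ne_of_one_lt_ncard
            (s := rowSupp A t) (by have := rows_ge_two hcore t; omega) j₀
          have hsub : ({j₀, q} : Finset (Fin n)) ⊆ Finset.univ.filter (fun j => A t j ≠ 0) := by
            intro u hu
            simp only [Finset.mem_insert, Finset.mem_singleton] at hu
            simp only [Finset.mem_filter, Finset.mem_univ, true_and]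
            rcases hu with rfl | rfl
            · rw [h1]; norm_num
            · exact hq
          have hge : z j₀ + z q ≤ ∑ j, A t j * z j := by
            rw [rowSum_eq hA]
            have hple := Finset.sum_le_sum_of_subset_of_nonneg hsub
              (fun j _ _ => le_trans (by norm_num : (0:ℝ) ≤ 1/2) (hzge j))
            have hpair : ∑ j ∈ ({j₀, q} : Finset (Fin n)), z j = z j₀ + z q :=
              Finset.sum_pair (Ne.symm hqne)
            rw [hpair] at hple
            exact hple
          have := hzge q
          rw [hzj₀] at hge
          linarith
      · intro j
        rw [hydef]; simp only
        have := hzge j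
        split_ifs with h
        · subst h; rw [hzj₀]; norm_num
        · linarith
    have hxy : z ∈ openSegment ℝ x y := by
      refine ⟨1/2, 1/2, by norm_num, by norm_num, by norm_num, ?_⟩
      funext j
      simp only [Pi.add_apply, Pi.smul_apply, smul_eq_mul, hxdef, hydef]
      ring
    have hxseg := hext.2 hxQ hyQ hzseg hxy
    obtain ⟨a, b, ha, hb, hab, hxv⟩ := hxseg
    have := congrFun hxv j₀
    simp only [Pi.add_apply, Pi.smul_apply, smul_eq_mul] at this
    rw [hj₀v, hj₀v'] at this
    have hxj₀ : x j₀ = 3/2 := by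
      have : x j₀ = z j₀ + 1/2 := by rw [hxdef]; simp
      rw [this, hzj₀]; norm_num
    rw [hxj₀] at this
    linarith
  -- Case B : disjoint supports, v' = 1 - v
  · push_neg at hint
    have hcompl : ∀ j, v' j = 1 - v j := by
      intro j
      rcases hbv j with h0 | h1
      · rcases hbv' j with g0 | g1
        · exfalso; have := hv1 j; rw [h0, g0] at this; linarith
        · rw [g1, h0]; norm_num
      · have hne1 := hint j h1
        rcases hbv' j with g0 | g1
        · rw [g0, h1]; norm_num
        · exact absurd g1 hne1
    obtain ⟨hr2, hdet, ⟨f, hfinj, hfrow, hfbig⟩, hrowcard, hcolcard⟩ := hcore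
    by_cases hr : r = 2
    -- r = 2 : impossible
    · have hrowsum1 : ∀ i, ∑ j, A₁ i j * v j = 1 ∧ ∑ j, A₁ i j * v' j = 1 := by
        intro i
        have hbrow : IsBinaryVec (A₁ i) := by
          intro j
          rw [congrFun (hfrow i) j]
          exact hA (f i) j
        have hv_ge : (1:ℝ) ≤ ∑ j, A₁ i j * v j := by
          have h := hvQ.1 (f i)
          have heq : ∑ j, A₁ i j * v j = ∑ j, A (f i) j * v j := by
            apply Finset.sum_congr rfl
            intro j _
            rw [congrFun (hfrow i) j]
          rw [heq]; exact h
        have hv'_ge : (1:ℝ) ≤ ∑ j, A₁ i j * v' j := by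
          have h := hv'Q.1 (f i)
          have heq : ∑ j, A₁ i j * v' j = ∑ j, A (f i) j * v' j := by
            apply Finset.sum_congr rfl
            intro j _
            rw [congrFun (hfrow i) j]
          rw [heq]; exact h
        have hsum2 : ∑ j, A₁ i j * v j + ∑ j, A₁ i j * v' j = 2 := by
          rw [← Finset.sum_add_distrib]
          have hterm : ∀ j ∈ Finset.univ, A₁ i j * v j + A₁ i j * v' j = A₁ i j := by
            intro j _
            have hc := hcompl j
            linear_combination (A₁ i j) * hc
          rw [Finset.sum_congr rfl hterm]
          rw [binary_sum_eq_card hbrow]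
          have hcard := hrowcard i
          rw [rowSupp_ncard_eq] at hcard
          rw [hcard, hr]
          norm_num
        exact ⟨by linarith, by linarith⟩
      have hmv : A₁.mulVec (fun j => v j - v' j) = 0 := by
        funext i
        simp only [Matrix.mulVec, dotProduct, Pi.zero_apply]
        have h1 := (hrowsum1 i).1
        have h2 := (hrowsum1 i).2
        have hsub : ∑ j, A₁ i j * (v j - v' j)
            = ∑ j, A₁ i j * v j - ∑ j, A₁ i j * v' j := by
          rw [← Finset.sum_sub_distrib]
          apply Finset.sum_congr rfl
          intro j _; ring
        rw [hsub, h1, h2, sub_self]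
      have hdet' : IsUnit A₁.det := isUnit_iff_ne_zero.mpr hdet
      have hzero : (fun j => v j - v' j) = 0 := by
        have h := congrArg (fun u => A₁⁻¹.mulVec u) hmv
        rw [Matrix.mulVec_mulVec, Matrix.nonsing_inv_mul _ hdet', Matrix.one_mulVec,
          Matrix.mulVec_zero] at h
        exact h
      apply hne
      funext j
      have := congrFun hzero j
      simp only [Pi.zero_apply] at this
      linarith
    -- r ≥ 3
    · have hr3 : 3 ≤ r := by omega
      have hzhalf : ∀ j, z j = 1/2 := by
        intro j
        rw [hzdef]
        have := hcompl j
        simp only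
        linarith
      have rowz32 : ∀ t, (3:ℝ)/2 ≤ ∑ j, A t j * z j := by
        intro t
        rw [rowSum_eq hA]
        have hconst : ∀ j ∈ Finset.univ.filter (fun j => A t j ≠ 0), z j = 1/2 :=
          fun j _ => hzhalf j
        rw [Finset.sum_congr rfl hconst, Finset.sum_const, nsmul_eq_mul]
        have hcard : 3 ≤ (Finset.univ.filter (fun j => A t j ≠ 0)).card := by
          have := rows_ge_three ⟨hr2, hdet, ⟨f, hfinj, hfrow, hfbig⟩, hrowcard, hcolcard⟩ hr3 t
          rw [rowSupp_ncard_eq] at this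
          exact this
        have : (3:ℝ) ≤ ((Finset.univ.filter (fun j => A t j ≠ 0)).card : ℝ) := by
          exact_mod_cast hcard
        linarith
      -- pick two distinct support elements of v
      have hs2 : 2 ≤ s := hbcore.1
      have hcards : (supp v).ncard = s := by
        have h1 := binary_sum_eq_supp_ncard hbv
        rw [hsv] at h1
        exact_mod_cast h1.symm
      obtain ⟨j₁, hj₁⟩ : ∃ j, j ∈ supp v := by
        rw [← Set.nonempty_def]
        apply Set.nonempty_of_ncard_ne_zero
        omega
      obtain ⟨j₂, hj₂, hj₂ne⟩ := Set.exists_ne_of_one_lt_ncard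
        (s := supp v) (by omega) j₁
      have hvj₁ : v j₁ = 1 := by
        rcases hbv j₁ with h | h
        · exact absurd h hj₁
        · exact h
      have hvj₂ : v j₂ = 1 := by
        rcases hbv j₂ with h | h
        · exact absurd h hj₂
        · exact h
      set x : Fin n → ℝ := fun j => z j + (if j = j₁ then (1:ℝ)/2 else 0) with hxdef
      set y : Fin n → ℝ := fun j => z j - (if j = j₁ then (1:ℝ)/2 else 0) with hydef
      have hxQ : x ∈ polyQ A := by
        constructor
        · intro t
          calc (1:ℝ) ≤ ∑ j, A t j * z j := hzQ.1 t
            _ ≤ ∑ j, A t j * x j := by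
                apply mono_row hA
                intro j
                rw [hxdef]
                simp only
                split_ifs <;> linarith
        · intro j
          rw [hxdef]; simp only
          have := hzge j
          split_ifs <;> linarith
      have hyQ : y ∈ polyQ A := by
        constructor
        · intro t
          have hsplit := perturb_split hA t z j₁ (1/2)
          rw [hydef, hsplit]
          have hA1 : A t j₁ * (1/2) ≤ 1/2 := by
            rcases hA t j₁ with h | h <;> rw [h] <;> norm_num
          have := rowz32 t
          linarith
        · intro j
          rw [hydef]; simp only
          have h1 := hzge j
          split_ifs with h
          · subst h; rw [hzhalf j]; norm_num
          · linarith
      have hxy : z ∈ openSegment ℝ x y := by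
        refine ⟨1/2, 1/2, by norm_num, by norm_num, by norm_num, ?_⟩
        funext j
        simp only [Pi.add_apply, Pi.smul_apply, smul_eq_mul, hxdef, hydef]
        ring
      have hxseg := hext.2 hxQ hyQ hzseg hxy
      obtain ⟨a, b, ha, hb, hab, hxv⟩ := hxseg
      have h1 := congrFun hxv j₁
      have h2 := congrFun hxv j₂
      simp only [Pi.add_apply, Pi.smul_apply, smul_eq_mul] at h1 h2
      rw [hvj₁, hcompl j₁, hvj₁] at h1
      rw [hvj₂, hcompl j₂, hvj₂] at h2
      have hxj₁ : x j₁ = 1 := by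
        have : x j₁ = z j₁ + 1/2 := by rw [hxdef]; simp
        rw [this, hzhalf j₁]; norm_num
      have hxj₂ : x j₂ = 1/2 := by
        have : x j₂ = z j₂ := by rw [hxdef]; simp [hj₂ne]
        rw [this, hzhalf j₂]
      rw [hxj₁] at h1
      rw [hxj₂] at h2
      linarith

end AuxStmt19G
/-- for a minimally nonideal matrix `A` (not a degenerate projective
plane) with core `A₁` (`r` ones per row) and blocker core `B₁` (`s` ones per row),
binary vertices of `Q(A)` with exactly `s` ones are always adjacent in `Q*(A)`, and are
adjacent in `Q(A)` iff their supports do not cover all coordinates. -/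
theorem stmt19 {m n : ℕ} (A : Matrix (Fin m) (Fin n) ℝ) (hA : IsBinaryMatrix A)
    (hmni : MinimallyNonideal A) (hiso : ¬ IsoToDegenProjPlane A)
    (A₁ B₁ : Matrix (Fin n) (Fin n) ℝ) (r s : ℕ)
    (hcore : IsCore A A₁ r) (hbcore : IsBlockerCore A B₁ s)
    (v v' : Fin n → ℝ) (hne : v ≠ v')
    (hbv : IsBinaryVec v) (hbv' : IsBinaryVec v')
    (hv : IsVertex (polyQ A) v) (hv' : IsVertex (polyQ A) v')
    (hsv : ∑ j, v j = (s : ℝ)) (hsv' : ∑ j, v' j = (s : ℝ)) :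
    AdjacentVerts (Qstar A) v v' ∧
      (AdjacentVerts (polyQ A) v v' ↔ supp v ∪ supp v' ≠ (Set.univ : Set (Fin n))) := by
  refine ⟨part1_adj hA hbcore hne hbv hbv' hv hv' hsv hsv', ?_, ?_⟩
  · intro hadj hUu
    exact union_univ_not_adj hA hcore hbcore hne hbv hbv'
      (extremePoints_subset hv) (extremePoints_subset hv') hsv hUu hadj.2.2.2
  · intro hU
    exact ⟨hne, hv, hv', part2_if hA hmni hbcore hne hbv hbv' hv hv' hsv hsv' hU⟩
end
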